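/- arXiv:1805.06755 — 8 statements merged into one kernel-verified Lean document; each statement's English description precedes it below -/
import Mathlib

section
/- Let m be a positive integer and let s, β, ν be real numbers with β > 0, 2mν > −1 and s > 2mνβ. Then ∫_0^∞ e^{−sx}·( ∑_{i=0}^{m-1} C(2m, i)·cosh((2m − 2i)βx) + (1/2)·C(2m, m) )^ν dx = 2^{−ν} · ∑_{k=0}^{∞} ( (−1)^k / k! ) · ( ∏_{j=0}^{k-1} (−2mν + j) ) · 1/(s − 2mνβ + 2kβ), where the infinite series on the right converges absolutely. (This series is the hypergeometric value ₂F₁(−2mν, s/(2β) − mν; s/(2β) − mν + 1; −1) divided by (s − 2mνβ).) -/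
open Finset MeasureTheory

noncomputable def bb (a : ℝ) (k : ℕ) : ℝ := (∏ j ∈ Finset.range k, (a - j)) / (Nat.factorial k)

lemma bb_zero (a : ℝ) : bb a 0 = 1 := by simp [bb]

lemma bb_succ (a : ℝ) (k : ℕ) : bb a (k+1) = bb a k * ((a - k)/(k+1)) := by
  have h1 : ((k+1).factorial : ℝ) = (k+1) * k.factorial := by
    push_cast [Nat.factorial_succ]; ring
  simp only [bb, Finset.prod_range_succ, h1, div_mul_div_comm]
  ring

lemma abs_bb_succ (a : ℝ) {k : ℕ} (hk : a ≤ k) :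
    |bb a (k+1)| = |bb a k| * (((k:ℝ) - a)/(k+1)) := by
  rw [bb_succ, abs_mul, abs_div, abs_of_nonneg (by positivity : (0:ℝ) ≤ (k:ℝ)+1),
    abs_of_nonpos (by linarith : a - (k:ℝ) ≤ 0)]
  ring_nf

-- ratio-test summability of (k+1)*|bb a k|*r^k for 0 ≤ r < 1
lemma summable_weighted (a : ℝ) {r : ℝ} (hr0 : 0 ≤ r) (hr1 : r < 1) :
    Summable (fun k : ℕ => ((k:ℝ)+1) * |bb a k| * r ^ k) := by
  set f : ℕ → ℝ := fun k => ((k:ℝ)+1) * |bb a k| * r ^ k with hf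
  have hfnn : ∀ k, 0 ≤ f k := fun k => by positivity
  set r' : ℝ := (r+1)/2 with hr'
  have hr'1 : r' < 1 := by rw [hr']; linarith
  apply summable_of_ratio_norm_eventually_le hr'1
  -- ratio identity : f (k+1) = g k * f k with g k := r * ((k+2)/(k+1)) * (|a-k|/(k+1))
  have hid : ∀ k : ℕ, f (k+1) = (r * (((k:ℝ)+2)/((k:ℝ)+1)) * (|a - k|/((k:ℝ)+1))) * f k := by
    intro k
    have h3 : ((k:ℝ)+1) ≠ 0 := by positivity
    simp only [hf, bb_succ, abs_mul, abs_div,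
      abs_of_nonneg (by positivity : (0:ℝ) ≤ (k:ℝ)+1)]
    push_cast
    field_simp
    all_goals ring
  have hg : Filter.Tendsto (fun k : ℕ => r * (((k:ℝ)+2)/((k:ℝ)+1)) * (|a - k|/((k:ℝ)+1)))
      Filter.atTop (nhds r) := by
    have t1 : Filter.Tendsto (fun k : ℕ => ((k:ℝ)+2)/((k:ℝ)+1)) Filter.atTop (nhds 1) := by
      have : (fun k : ℕ => ((k:ℝ)+2)/((k:ℝ)+1)) = fun k : ℕ => 1 + 1/((k:ℝ)+1) := by
        funext k
        have : ((k:ℝ)+1) ≠ 0 := by positivity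
        field_simp
        ring
      rw [this]
      simpa using tendsto_const_nhds.add (tendsto_one_div_add_atTop_nhds_zero_nat (𝕜 := ℝ))
    have t2 : Filter.Tendsto (fun k : ℕ => |a - (k:ℝ)|/((k:ℝ)+1)) Filter.atTop (nhds 1) := by
      have heq : ∀ᶠ k : ℕ in Filter.atTop,
          |a - (k:ℝ)|/((k:ℝ)+1) = 1 - (a+1) * (1/((k:ℝ)+1)) := by
        filter_upwards [Filter.eventually_ge_atTop (Nat.ceil (max a 0))] with k hk
        have hak : a ≤ (k:ℝ) := by
          calc a ≤ max a 0 := le_max_left _ _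
          _ ≤ (Nat.ceil (max a 0) : ℝ) := Nat.le_ceil _
          _ ≤ (k:ℝ) := by exact_mod_cast hk
        have h3 : ((k:ℝ)+1) ≠ 0 := by positivity
        rw [abs_of_nonpos (by linarith : a - (k:ℝ) ≤ 0)]
        field_simp
        all_goals ring
      have : Filter.Tendsto (fun k : ℕ => 1 - (a+1) * (1/((k:ℝ)+1))) Filter.atTop (nhds 1) := by
        have := (tendsto_const_nhds (x := (a+1))).mul tendsto_one_div_add_atTop_nhds_zero_nat
        simpa using tendsto_const_nhds.sub this
      exact Filter.Tendsto.congr' (heq.mono fun k hk => hk.symm) this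
    have := (tendsto_const_nhds (x := r)).mul t1 |>.mul t2
    simpa using this
  have hev : ∀ᶠ k : ℕ in Filter.atTop,
      (r * (((k:ℝ)+2)/((k:ℝ)+1)) * (|a - k|/((k:ℝ)+1))) ≤ r' := by
    have : r < r' := by rw [hr']; linarith
    exact hg.eventually_le_const this
  filter_upwards [hev] with k hk
  rw [Real.norm_eq_abs, Real.norm_eq_abs, abs_of_nonneg (hfnn _), abs_of_nonneg (hfnn _), hid k]
  have : 0 ≤ r * (((k:ℝ)+2)/((k:ℝ)+1)) * (|a - k|/((k:ℝ)+1)) := by positivity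
  exact mul_le_mul_of_nonneg_right hk (hfnn k) |>.trans_eq rfl

section
variable (a : ℝ)

lemma summable_bb_pow {t : ℝ} (ht : |t| < 1) :
    Summable (fun k : ℕ => bb a k * t ^ k) := by
  apply Summable.of_norm_bounded (summable_weighted a (abs_nonneg t) ht)
  intro k
  rw [Real.norm_eq_abs, abs_mul, abs_pow]
  have h1 : (1:ℝ) ≤ (k:ℝ)+1 := le_add_of_nonneg_left (Nat.cast_nonneg k)
  have := mul_le_mul_of_nonneg_right (le_mul_of_one_le_left (abs_nonneg (bb a k)) h1)
    (pow_nonneg (abs_nonneg t) k)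
  linarith

lemma summable_deriv_bound {r : ℝ} (hr0 : 0 < r) (hr1 : r < 1) :
    Summable (fun k : ℕ => ((k:ℝ)+1) * |bb a k| * r ^ k / r) :=
  (summable_weighted a hr0.le hr1).div_const r

noncomputable def fb (a : ℝ) : ℝ → ℝ := fun t => ∑' k : ℕ, bb a k * t ^ k

lemma hasDerivAt_fb {t : ℝ} (ht : |t| < 1) :
    HasDerivAt (fb a) (∑' k : ℕ, bb a k * ((k:ℕ) * t ^ (k-1))) t := by
  set r : ℝ := (|t| + 1)/2 with hr
  have hrt : |t| < r := by rw [hr]; linarith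
  have hr0 : 0 < r := by positivity
  have hr1 : r < 1 := by rw [hr]; linarith
  refine hasDerivAt_tsum_of_isPreconnected (summable_deriv_bound a hr0 hr1)
    Metric.isOpen_ball ((convex_ball (0:ℝ) r).isPreconnected)
    (fun k y _ => (hasDerivAt_pow k y).const_mul (bb a k)) ?_
    (Metric.mem_ball_self hr0) (summable_bb_pow a (by norm_num : |(0:ℝ)| < 1))
    (by simpa [Real.dist_eq] using hrt)
  intro k y hy
  have hyr : |y| < r := by simpa [Real.dist_eq] using hy
  rw [Real.norm_eq_abs, abs_mul, abs_mul, abs_pow, Nat.abs_cast]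
  rcases Nat.eq_zero_or_pos k with hk | hk
  · subst hk; simp; positivity
  · have h1 : |y| ^ (k-1) ≤ r ^ (k-1) := pow_le_pow_left₀ (abs_nonneg y) hyr.le _
    have h2 : r ^ (k-1) = r ^ k / r := by
      rw [eq_div_iff hr0.ne', ← pow_succ]
      congr 1
      omega
    have h3 : (k:ℝ) * |bb a k| ≤ ((k:ℝ)+1) * |bb a k| := by nlinarith [abs_nonneg (bb a k)]
    calc |bb a k| * ((k:ℝ) * |y| ^ (k-1))
        ≤ |bb a k| * ((k:ℝ) * r ^ (k-1)) := by
          have hc : (0:ℝ) ≤ |bb a k| * (k:ℝ) := by positivity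
          nlinarith [abs_nonneg (bb a k), Nat.cast_nonneg (α := ℝ) k]
      _ = ((k:ℝ) * |bb a k|) * (r ^ k / r) := by rw [h2]; ring
      _ ≤ (((k:ℝ)+1) * |bb a k|) * (r ^ k / r) := mul_le_mul_of_nonneg_right h3 (by positivity)
      _ = ((k:ℝ)+1) * |bb a k| * r ^ k / r := by ring
end

section

variable (a : ℝ)

lemma summable_deriv_term {t : ℝ} (ht : |t| < 1) :
    Summable (fun k : ℕ => bb a k * ((k:ℕ) * t ^ (k-1))) := by
  set r : ℝ := (|t| + 1)/2 with hr
  have hrt : |t| ≤ r := by rw [hr]; linarith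
  have hr0 : 0 < r := by positivity
  have hr1 : r < 1 := by rw [hr]; linarith
  apply Summable.of_norm_bounded ((summable_weighted a hr0.le hr1).div_const r)
  intro k
  rw [Real.norm_eq_abs, abs_mul, abs_mul, abs_pow, Nat.abs_cast]
  rcases Nat.eq_zero_or_pos k with hk | hk
  · subst hk; simp; positivity
  · have h1 : |t| ^ (k-1) ≤ r ^ (k-1) := pow_le_pow_left₀ (abs_nonneg t) hrt _
    have h2 : r ^ (k-1) = r ^ k / r := by
      rw [eq_div_iff hr0.ne', ← pow_succ]; congr 1; omega
    have h3 : (k:ℝ) * |bb a k| ≤ ((k:ℝ)+1) * |bb a k| := by nlinarith [abs_nonneg (bb a k)]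
    calc |bb a k| * ((k:ℝ) * |t| ^ (k-1))
        ≤ |bb a k| * ((k:ℝ) * r ^ (k-1)) := by gcongr
      _ = ((k:ℝ) * |bb a k|) * (r ^ k / r) := by rw [h2]; ring
      _ ≤ (((k:ℝ)+1) * |bb a k|) * (r ^ k / r) := mul_le_mul_of_nonneg_right h3 (by positivity)
      _ = ((k:ℝ)+1) * |bb a k| * r ^ k / r := by ring

lemma summable_k_bb {t : ℝ} (ht : |t| < 1) :
    Summable (fun k : ℕ => (k:ℝ) * bb a k * t ^ k) := by
  apply Summable.of_norm_bounded (summable_weighted a (abs_nonneg t) ht)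
  intro k
  rw [Real.norm_eq_abs, abs_mul, abs_mul, abs_pow, Nat.abs_cast]
  have : (k:ℝ) ≤ (k:ℝ)+1 := by linarith
  nlinarith [abs_nonneg (bb a k), pow_nonneg (abs_nonneg t) k, Nat.cast_nonneg (α := ℝ) k,
    mul_nonneg (abs_nonneg (bb a k)) (pow_nonneg (abs_nonneg t) k)]

lemma summable_amk_bb {t : ℝ} (ht : |t| < 1) :
    Summable (fun k : ℕ => (a - k) * bb a k * t ^ k) := by
  apply Summable.of_norm_bounded ((summable_weighted a (abs_nonneg t) ht).mul_left (|a|+1))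
  intro k
  rw [Real.norm_eq_abs, abs_mul, abs_mul, abs_pow]
  have h1 : |a - (k:ℝ)| ≤ (|a|+1) * ((k:ℝ)+1) := by
    have := abs_nonneg a
    have h2 : |a - (k:ℝ)| ≤ |a| + (k:ℝ) := by
      calc |a - (k:ℝ)| ≤ |a| + |(k:ℝ)| := abs_sub _ _
        _ = |a| + (k:ℝ) := by rw [Nat.abs_cast]
    nlinarith [Nat.cast_nonneg (α := ℝ) k]
  calc |a - (k:ℝ)| * |bb a k| * |t| ^ k
      ≤ ((|a|+1) * ((k:ℝ)+1)) * |bb a k| * |t| ^ k := by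
        nlinarith [abs_nonneg (bb a k), pow_nonneg (abs_nonneg t) k,
          mul_nonneg (abs_nonneg (bb a k)) (pow_nonneg (abs_nonneg t) k)]
    _ = (|a|+1) * (((k:ℝ)+1) * |bb a k| * |t| ^ k) := by ring

lemma ode_fb {t : ℝ} (ht : |t| < 1) :
    (1 + t) * (∑' k : ℕ, bb a k * ((k:ℕ) * t ^ (k-1))) = a * fb a t := by
  set D := ∑' k : ℕ, bb a k * ((k:ℕ) * t ^ (k-1)) with hD
  have hSg := summable_deriv_term a ht
  have hS1 := summable_k_bb a ht
  have hS3 := summable_amk_bb a ht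
  have hS2 := summable_bb_pow a ht
  have hshift : D = ∑' k : ℕ, (a - k) * bb a k * t ^ k := by
    rw [hD, hSg.tsum_eq_zero_add]
    simp only [Nat.cast_zero, pow_zero, mul_zero, zero_mul, zero_add, Nat.cast_add,
      Nat.cast_one, Nat.add_sub_cancel]
    congr 1
    funext k
    rw [bb_succ]
    have : ((k:ℝ)+1) ≠ 0 := by positivity
    field_simp
  have htD : t * D = ∑' k : ℕ, (k:ℝ) * bb a k * t ^ k := by
    rw [hD, ← tsum_mul_left]
    congr 1
    funext k
    cases k with
    | zero => simp
    | succ j => simp only [Nat.add_sub_cancel]; push_cast; ring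
  have : (1 + t) * D = D + t * D := by ring
  rw [this, htD, hshift, ← hS3.tsum_add hS1, fb]
  rw [← tsum_mul_left]
  congr 1
  funext k
  ring

lemma fb_eq_rpow {t : ℝ} (ht1 : -1 < t) (ht2 : t < 1) :
    fb a t = (1 + t) ^ a := by
  set F : ℝ → ℝ := fun y => fb a y * (1 + y) ^ (-a) with hF
  have hderiv : ∀ y ∈ Set.Ioo (-1:ℝ) 1, HasDerivAt F 0 y := by
    intro y hy
    obtain ⟨hy1, hy2⟩ := hy
    have hys : |y| < 1 := abs_lt.mpr ⟨hy1, hy2⟩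
    have hpos : (0:ℝ) < 1 + y := by linarith
    have hD := hasDerivAt_fb a hys
    have hP : HasDerivAt (fun z : ℝ => (1 + z) ^ (-a)) (-a * (1 + y) ^ (-a - 1)) y := by
      have h1 : HasDerivAt (fun z : ℝ => 1 + z) 1 y := (hasDerivAt_id y).const_add 1
      have h2 := (Real.hasDerivAt_rpow_const (x := 1 + y) (p := -a) (Or.inl hpos.ne')).comp y h1
      exact h2.congr_deriv (by ring)
    have := hD.mul hP
    refine this.congr_deriv ?_
    symm
    have key : (1 + y) ^ (-a) = (1 + y) * (1 + y) ^ (-a - 1) := by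
      conv_lhs => rw [show -a = 1 + (-a - 1) by ring]
      rw [Real.rpow_add hpos, Real.rpow_one]
    rw [key]
    have hode := ode_fb a hys
    linear_combination (-((1 + y) ^ (-a - 1))) * hode
  have hconst : F t = F 0 := by
    refine (convex_Ioo (-1:ℝ) 1).is_const_of_fderivWithin_eq_zero
      (f := F) (fun y hy => ((hderiv y hy).differentiableAt).differentiableWithinAt) ?_
      ⟨ht1, ht2⟩ (by constructor <;> norm_num)
    intro y hy
    rw [fderivWithin_of_isOpen isOpen_Ioo hy, ((hderiv y hy).hasFDerivAt).fderiv]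
    ext
    simp
  have hF0 : F 0 = 1 := by
    have : fb a 0 = 1 := by
      rw [fb, tsum_eq_single 0 (fun k hk => by simp [zero_pow hk])]
      simp [bb_zero]
    simp [hF, this]
  have hpos : (0:ℝ) < 1 + t := by linarith
  have hmain : fb a t * (1 + t) ^ (-a) = 1 := by
    have h := hconst.trans hF0
    simpa [hF] using h
  have hne : (1 + t) ^ (-a) ≠ 0 := (Real.rpow_pos_of_pos hpos _).ne'
  have : fb a t = ((1 + t) ^ (-a))⁻¹ := by
    field_simp at hmain ⊢
    linarith [hmain]
  rw [this, ← Real.rpow_neg hpos.le, neg_neg]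

theorem hasSum_binomial {t : ℝ} (ht1 : -1 < t) (ht2 : t < 1) :
    HasSum (fun k : ℕ => bb a k * t ^ k) ((1 + t) ^ a) := by
  have h := (summable_bb_pow a (abs_lt.mpr ⟨ht1, ht2⟩)).hasSum
  rwa [show (∑' k : ℕ, bb a k * t ^ k) = (1 + t) ^ a from fb_eq_rpow a ht1 ht2] at h
end


lemma summable_main (a : ℝ) (ha : -1 < a) {c β : ℝ} (hc : 0 < c) (hβ : 0 < β) :
    Summable (fun k : ℕ => |bb a k| / (c + 2 * k * β)) := by
  set ε : ℝ := (1 + a)/2 with hε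
  have hε0 : 0 < ε := by rw [hε]; linarith
  set u : ℕ → ℝ := fun k => k * |bb a k| / (c + 2 * k * β) with hu
  have hd : ∀ k : ℕ, (0:ℝ) < c + 2 * k * β := fun k => by positivity
  have hun : ∀ k, 0 ≤ u k := fun k => by
    apply div_nonneg _ (hd k).le
    positivity
  obtain ⟨N, hN⟩ := exists_nat_gt (max a (((1-a)*c + 2*(1+a)*β)/(2*(1+a)*β)))
  have hNa : a < (N:ℝ) := lt_of_le_of_lt (le_max_left _ _) hN
  have key : ∀ k : ℕ, N ≤ k → ε * (|bb a k| / (c + 2*k*β)) + u (k+1) ≤ u k := by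
    intro k hk
    have hka : a ≤ (k:ℝ) := le_trans hNa.le (by exact_mod_cast hk)
    have hk2 : (1-a)*c + 2*(1+a)*β < 2*(1+a)*β*k := by
      have h1 : ((1-a)*c + 2*(1+a)*β)/(2*(1+a)*β) < (k:ℝ) :=
        lt_of_le_of_lt (le_max_right _ _) (lt_of_lt_of_le hN (by exact_mod_cast hk))
      have h2 : (0:ℝ) < 2*(1+a)*β := by nlinarith
      rw [div_lt_iff₀ h2] at h1
      linarith
    set B := |bb a k| with hB
    have hB0 : 0 ≤ B := abs_nonneg _
    set d1 := c + 2*k*β with hd1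
    set d2 := c + 2*(k+1:ℕ)*β with hd2
    have hd10 : 0 < d1 := hd k
    have hd20 : 0 < d2 := hd (k+1)
    have hd2' : d2 = c + 2*k*β + 2*β := by rw [hd2]; push_cast; ring
    have hu1 : u (k+1) = (k - a) * B / d2 := by
      rw [hu]
      simp only
      rw [abs_bb_succ a hka, ← hB, ← hd2]
      have : ((k:ℝ)+1) ≠ 0 := by positivity
      push_cast
      field_simp
    rw [hu1, hu]
    simp only [← hB, ← hd1]
    have expand : (k:ℝ) * B / d1 - ε * (B / d1) - ((k:ℝ) - a) * B / d2
        = B * (((k:ℝ) - ε) * d2 - ((k:ℝ) - a) * d1) / (d1 * d2) := by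
      field_simp
    have hnum : 0 ≤ ((k:ℝ) - ε) * d2 - ((k:ℝ) - a) * d1 := by
      rw [hd2', hd1]
      have : ((k:ℝ) - ε) * (c + 2*k*β + 2*β) - ((k:ℝ) - a) * (c + 2*k*β)
          = (2*(1+a)*k*β + a*c) - ε * (c + 2*k*β + 2*β) := by ring
      rw [this, hε]
      nlinarith
    have : 0 ≤ (k:ℝ) * B / d1 - ε * (B / d1) - ((k:ℝ) - a) * B / d2 := by
      rw [expand]
      exact div_nonneg (mul_nonneg hB0 hnum) (by positivity)
    linarith
  -- telescoping bound for shifted series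
  set v : ℕ → ℝ := fun i => |bb a (i + N)| / (c + 2*(i+N:ℕ)*β) with hv
  have hvn : ∀ i, 0 ≤ v i := fun i => div_nonneg (abs_nonneg _) (hd _).le
  have tel : ∀ n : ℕ, ∑ i ∈ range n, ε * v i ≤ u N - u (n + N) := by
    intro n
    induction n with
    | zero => simp
    | succ n ih =>
        rw [Finset.sum_range_succ]
        have hk := key (n + N) (Nat.le_add_left _ _)
        have : ε * v n + u (n + N + 1) ≤ u (n + N) := by
          rw [hv]; simpa using hk
        have hnn : n + 1 + N = n + N + 1 := by omega
        rw [hnn]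
        linarith
  have hvsum : Summable v := by
    apply summable_of_sum_range_le hvn (c := u N / ε)
    intro n
    rw [le_div_iff₀ hε0]
    have h1 := tel n
    have h2 := hun (n + N)
    rw [← Finset.mul_sum] at h1
    linarith [h1]
  have := (summable_nat_add_iff (f := fun k : ℕ => |bb a k| / (c + 2 * k * β)) N).mp ?_
  · exact this
  · exact hvsum

lemma cosh_pow_identity (m : ℕ) (hm : 0 < m) (u : ℝ) :
    (∑ i ∈ Finset.range m, (Nat.choose (2*m) i : ℝ) * Real.cosh ((2*(m:ℝ) - 2*i) * u))
      + (1/2) * (Nat.choose (2*m) m : ℝ)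
    = 2^(2*m-1) * Real.cosh u ^ (2*m) := by
  set f : ℕ → ℝ := fun i => (Nat.choose (2*m) i : ℝ) * Real.exp ((2*(m:ℝ) - 2*i) * u) with hf
  have key1 : ∑ i ∈ range (2*m+1), f i = (Real.exp u + Real.exp (-u))^(2*m) := by
    rw [show Real.exp u + Real.exp (-u) = Real.exp (-u) + Real.exp u from add_comm _ _, add_pow]
    apply Finset.sum_congr rfl
    intro i hi
    have hi2m : i ≤ 2*m := by simpa [Nat.lt_succ_iff] using hi
    rw [hf]
    simp only
    rw [← Real.exp_nat_mul, ← Real.exp_nat_mul, ← Real.exp_add]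
    have hcast : ((2*m - i : ℕ) : ℝ) = 2*(m:ℝ) - i := by
      push_cast [Nat.cast_sub hi2m]
      ring
    rw [hcast]
    ring_nf
  -- split the sum
  have h2m1 : 2*m+1 = m + (m+1) := by omega
  have key2 : ∑ i ∈ range (2*m+1), f i
      = ∑ i ∈ range m, f i + (∑ j ∈ range m, f (2*m - j)) + f m := by
    rw [h2m1, Finset.sum_range_add, Finset.sum_range_succ']
    have : ∀ j ∈ range m, f (m + (j+1)) = f (2*m - (m - 1 - j)) := by
      intro j hj
      have hjm : j < m := Finset.mem_range.mp hj
      congr 1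
      omega
    rw [Finset.sum_congr rfl this, Finset.sum_range_reflect (fun j => f (2*m - j)) m]
    have hm0 : f (m + 0) = f m := by norm_num
    rw [hm0]
    ring
  have key3 : ∀ j, j < m → f j + f (2*m - j)
      = (Nat.choose (2*m) j : ℝ) * (2 * Real.cosh ((2*(m:ℝ) - 2*j) * u)) := by
    intro j hj
    have hj2m : j ≤ 2*m := by omega
    have hchoose : (Nat.choose (2*m) (2*m - j) : ℝ) = (Nat.choose (2*m) j : ℝ) := by
      exact_mod_cast congrArg Nat.cast (Nat.choose_symm hj2m)
    have hcast : ((2*m - j : ℕ) : ℝ) = 2*(m:ℝ) - j := by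
      push_cast [Nat.cast_sub hj2m]
      ring
    rw [hf]
    simp only
    rw [hchoose, hcast, Real.cosh_eq]
    have harg : (2*(m:ℝ) - 2*(2*(m:ℝ) - (j:ℝ))) * u = -((2*(m:ℝ) - 2*j) * u) := by ring
    rw [harg]
    ring
  have hfm : f m = (Nat.choose (2*m) m : ℝ) := by
    rw [hf]
    simp only
    have : (2*(m:ℝ) - 2*m) * u = 0 := by ring
    rw [this, Real.exp_zero, mul_one]
  have key4 : ∑ i ∈ range (2*m+1), f i
      = 2 * ((∑ i ∈ range m, (Nat.choose (2*m) i : ℝ) * Real.cosh ((2*(m:ℝ) - 2*i) * u))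
          + (1/2) * (Nat.choose (2*m) m : ℝ)) := by
    rw [key2, hfm]
    have : ∑ j ∈ range m, f (2*m - j)
        = ∑ j ∈ range m, ((Nat.choose (2*m) j : ℝ) * (2 * Real.cosh ((2*(m:ℝ) - 2*j) * u)) - f j) := by
      apply Finset.sum_congr rfl
      intro j hj
      have := key3 j (Finset.mem_range.mp hj)
      linarith
    rw [this, Finset.sum_sub_distrib]
    have h2s : ∑ x ∈ range m, (Nat.choose (2*m) x : ℝ) * (2 * Real.cosh ((2*(m:ℝ) - 2*x) * u))
        = 2 * ∑ x ∈ range m, (Nat.choose (2*m) x : ℝ) * Real.cosh ((2*(m:ℝ) - 2*x) * u) := by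
      rw [Finset.mul_sum]
      exact Finset.sum_congr rfl (fun x _ => by ring)
    rw [h2s]
    ring
  have hcosh : Real.cosh u ^ (2*m) = (Real.exp u + Real.exp (-u))^(2*m) / 2^(2*m) := by
    rw [Real.cosh_eq, div_pow]
  rw [hcosh, ← key1, key4]
  have h2 : (2:ℝ)^(2*m) = 2^(2*m-1) * 2 := by
    rw [← pow_succ]
    congr 1
    omega
  rw [h2]
  have hne : (2:ℝ)^(2*m-1) ≠ 0 := by positivity
  field_simp
  ring_nf
  simp only [mul_comm u]
  ring

lemma integral_exp_neg_rate {lam : ℝ} (h : 0 < lam) :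
    ∫ x in Set.Ioi (0:ℝ), Real.exp (-(lam*x)) = lam⁻¹ := by
  have h1 := MeasureTheory.integral_comp_mul_left_Ioi (fun y => Real.exp (-y)) 0 h
  simp only [mul_zero] at h1
  rw [integral_exp_neg_Ioi_zero] at h1
  simpa using h1


lemma stageA (m : ℕ) (hm : 0 < m) (s β ν x : ℝ) :
    Real.exp (-s*x) * ((∑ i ∈ Finset.range m,
        (Nat.choose (2*m) i : ℝ) * Real.cosh ((2*(m:ℝ) - 2*(i:ℝ)) * (β*x)))
      + (1/2) * (Nat.choose (2*m) m : ℝ)) ^ ν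
    = 2 ^ (-ν) * (Real.exp (-((s - 2*(m:ℝ)*ν*β)*x))
        * (1 + Real.exp (-(2*β)*x)) ^ (2*(m:ℝ)*ν)) := by
  rw [cosh_pow_identity m hm (β*x)]
  set u := β*x with hu
  set P := 1 + Real.exp (-(2*β)*x) with hP
  have hPpos : 0 < P := by positivity
  have hexpu : 0 < Real.exp u := Real.exp_pos u
  have h1 : Real.cosh u = Real.exp u * P / 2 := by
    rw [Real.cosh_eq, hP]
    have h2 : Real.exp (-u) = Real.exp u * Real.exp (-(2*β)*x) := by
      rw [← Real.exp_add]
      congr 1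
      rw [hu]
      ring
    rw [h2]
    ring
  have h2p : (2:ℝ)^(2*m) = 2^(2*m-1)*2 := by
    rw [← pow_succ]
    congr 1
    omega
  have hbase : (2:ℝ)^(2*m-1) * Real.cosh u ^ (2*m) = (Real.exp u * P)^(2*m) * 2⁻¹ := by
    rw [h1, div_pow, h2p]
    have : ((2:ℝ)^(2*m-1)) ≠ 0 := by positivity
    field_simp
  rw [hbase]
  have hY : 0 < Real.exp u * P := by positivity
  rw [Real.mul_rpow (by positivity) (by norm_num)]
  rw [← Real.rpow_natCast (Real.exp u * P) (2*m), ← Real.rpow_mul hY.le]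
  have hcast : ((2*m : ℕ):ℝ) * ν = 2*(m:ℝ)*ν := by push_cast; ring
  rw [hcast]
  rw [Real.mul_rpow hexpu.le hPpos.le]
  have hev : (Real.exp u) ^ (2*(m:ℝ)*ν) = Real.exp (u * (2*(m:ℝ)*ν)) := by
    rw [Real.rpow_def_of_pos hexpu, Real.log_exp]
  rw [hev]
  have hinv : ((2:ℝ)⁻¹) ^ ν = (2:ℝ) ^ (-ν) := by
    rw [Real.inv_rpow (by norm_num : (0:ℝ) ≤ 2), ← Real.rpow_neg (by norm_num : (0:ℝ) ≤ 2)]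
  rw [hinv]
  have hee : Real.exp (-s*x) * Real.exp (u * (2*(m:ℝ)*ν)) = Real.exp (-((s - 2*(m:ℝ)*ν*β)*x)) := by
    rw [← Real.exp_add]
    congr 1
    rw [hu]
    ring
  calc Real.exp (-s*x) * (Real.exp (u * (2*(m:ℝ)*ν)) * P ^ (2*(m:ℝ)*ν) * 2^(-ν))
      = 2^(-ν) * ((Real.exp (-s*x) * Real.exp (u * (2*(m:ℝ)*ν))) * P ^ (2*(m:ℝ)*ν)) := by ring
    _ = 2 ^ (-ν) * (Real.exp (-((s - 2*(m:ℝ)*ν*β)*x)) * P ^ (2*(m:ℝ)*ν)) := by rw [hee]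


lemma term_eq (a w : ℝ) (k : ℕ) :
    ((-1:ℝ)^k / (Nat.factorial k : ℝ)) * (∏ j ∈ Finset.range k, (-a + (j:ℝ))) * w
      = bb a k * w := by
  have h1 : ∏ j ∈ Finset.range k, (-a + (j:ℝ)) = (-1:ℝ)^k * ∏ j ∈ Finset.range k, (a - j) := by
    have h2 : ∀ j ∈ Finset.range k, (-a + (j:ℝ)) = (-1:ℝ) * (a - j) := fun j _ => by ring
    rw [Finset.prod_congr rfl h2, Finset.prod_mul_distrib, Finset.prod_const,
      Finset.card_range]
  have h3 : ((-1:ℝ)^k) * ((-1:ℝ)^k) = 1 := by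
    rw [← mul_pow]
    norm_num
  rw [h1]
  calc ((-1:ℝ)^k / (Nat.factorial k : ℝ)) * ((-1:ℝ)^k * ∏ j ∈ Finset.range k, (a - (j:ℝ))) * w
      = ((-1:ℝ)^k * (-1:ℝ)^k) *
        (((∏ j ∈ Finset.range k, (a - (j:ℝ))) / (Nat.factorial k : ℝ)) * w) := by ring
    _ = bb a k * w := by rw [h3, one_mul, bb]

lemma stageB (a : ℝ) (ha : -1 < a) {c β : ℝ} (hc : 0 < c) (hβ : 0 < β) :
    ∫ x in Set.Ioi (0:ℝ), Real.exp (-(c*x)) * (1 + Real.exp (-(2*β)*x)) ^ a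
      = ∑' k : ℕ, bb a k * (c + 2*(k:ℝ)*β)⁻¹ := by
  set G : ℕ → ℝ → ℝ := fun k x => bb a k * Real.exp (-((c + 2*(k:ℝ)*β)*x)) with hG
  have hpos : ∀ k : ℕ, (0:ℝ) < c + 2*(k:ℝ)*β := fun k => by positivity
  have hint : ∀ k, IntegrableOn (G k) (Set.Ioi 0) := by
    intro k
    have h0 := (exp_neg_integrableOn_Ioi 0 (hpos k)).const_mul (bb a k)
    have he : G k = fun x => bb a k * Real.exp (-(c + 2*(k:ℝ)*β) * x) := by
      funext x
      simp only [hG, neg_mul]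
    rw [he]
    exact h0
  have hGint : ∀ k, ∫ x in Set.Ioi (0:ℝ), G k x = bb a k * (c + 2*(k:ℝ)*β)⁻¹ := by
    intro k
    rw [hG]
    simp only
    rw [MeasureTheory.integral_const_mul, integral_exp_neg_rate (hpos k)]
  have hnorm : ∀ k, (∫ x in Set.Ioi (0:ℝ), ‖G k x‖) = |bb a k| * (c + 2*(k:ℝ)*β)⁻¹ := by
    intro k
    simp only [hG, norm_mul, Real.norm_eq_abs, Real.abs_exp]
    rw [MeasureTheory.integral_const_mul, integral_exp_neg_rate (hpos k)]
  have hsum : Summable (fun k => ∫ x in Set.Ioi (0:ℝ), ‖G k x‖) := by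
    apply Summable.congr ((summable_main a ha hc hβ))
    intro k
    rw [hnorm k, div_eq_mul_inv]
  have swap := MeasureTheory.integral_tsum_of_summable_integral_norm hint hsum
  have hpt : ∀ x ∈ Set.Ioi (0:ℝ),
      Real.exp (-(c*x)) * (1 + Real.exp (-(2*β)*x)) ^ a = ∑' k, G k x := by
    intro x hx
    have hx0 : (0:ℝ) < x := hx
    have ht0 : 0 < Real.exp (-(2*β)*x) := Real.exp_pos _
    have ht1 : Real.exp (-(2*β)*x) < 1 := by
      rw [Real.exp_lt_one_iff]
      nlinarith
    have hbin := (hasSum_binomial a (t := Real.exp (-(2*β)*x)) (by linarith) ht1).mul_left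
      (Real.exp (-(c*x)))
    rw [← hbin.tsum_eq]
    apply tsum_congr
    intro k
    rw [hG]
    simp only
    rw [show -((c + 2*(k:ℝ)*β)*x) = -(c*x) + (k:ℝ)*(-(2*β)*x) by ring, Real.exp_add,
      Real.exp_nat_mul]
    ring
  rw [MeasureTheory.setIntegral_congr_fun measurableSet_Ioi hpt, ← swap]
  exact tsum_congr hGint


theorem stmt_6 (m : ℕ) (hm : 0 < m) (s β ν : ℝ) (hβ : 0 < β)
    (hν : 2 * (m : ℝ) * ν > -1) (hs : s > 2 * (m : ℝ) * ν * β) :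
    (Summable fun k : ℕ =>
        |((-1 : ℝ) ^ k / (Nat.factorial k : ℝ)) *
          (∏ j ∈ Finset.range k, (-(2 * (m : ℝ) * ν) + (j : ℝ))) *
          (1 / (s - 2 * (m : ℝ) * ν * β + 2 * (k : ℝ) * β))|) ∧
    (∫ x in Set.Ioi (0 : ℝ),
        Real.exp (-s * x) *
          ((∑ i ∈ Finset.range m,
              (Nat.choose (2 * m) i : ℝ) *
                Real.cosh ((2 * (m : ℝ) - 2 * (i : ℝ)) * (β * x)))
            + (1 / 2) * (Nat.choose (2 * m) m : ℝ)) ^ ν)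
    = 2 ^ (-ν) *
        ∑' k : ℕ,
          ((-1 : ℝ) ^ k / (Nat.factorial k : ℝ)) *
            (∏ j ∈ Finset.range k, (-(2 * (m : ℝ) * ν) + (j : ℝ))) *
            (1 / (s - 2 * (m : ℝ) * ν * β + 2 * (k : ℝ) * β)) := by
  have ha : (-1:ℝ) < 2 * (m:ℝ) * ν := hν
  have hc : (0:ℝ) < s - 2 * (m:ℝ) * ν * β := by linarith
  have hden : ∀ k : ℕ, s - 2 * (m:ℝ) * ν * β + 2 * (k:ℝ) * β
      = (s - 2 * (m:ℝ) * ν * β) + 2 * (k:ℝ) * β := fun k => rfl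
  have hdpos : ∀ k : ℕ, (0:ℝ) < s - 2 * (m:ℝ) * ν * β + 2 * (k:ℝ) * β := fun k => by positivity
  constructor
  · apply Summable.congr (summable_main (2 * (m:ℝ) * ν) ha hc hβ)
    intro k
    rw [term_eq (2 * (m:ℝ) * ν) (1 / (s - 2 * (m:ℝ) * ν * β + 2 * (k:ℝ) * β)) k]
    rw [abs_mul, abs_of_pos (by positivity : (0:ℝ) < 1 / (s - 2 * (m:ℝ) * ν * β + 2 * (k:ℝ) * β))]
    rw [div_eq_mul_inv, one_div]
  · rw [MeasureTheory.setIntegral_congr_fun measurableSet_Ioi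
      (fun x _ => stageA m hm s β ν x)]
    rw [MeasureTheory.integral_const_mul]
    congr 1
    · rw [show (fun x => Real.exp (-((s - 2*(m:ℝ)*ν*β)*x))
            * (1 + Real.exp (-(2*β)*x)) ^ (2*(m:ℝ)*ν))
          = fun x => Real.exp (-((s - 2*(m:ℝ)*ν*β)*x))
            * (1 + Real.exp (-(2*β)*x)) ^ (2*(m:ℝ)*ν) from rfl]
      rw [stageB (2 * (m:ℝ) * ν) ha hc hβ]
      apply tsum_congr
      intro k
      rw [term_eq (2 * (m:ℝ) * ν) (1 / (s - 2 * (m:ℝ) * ν * β + 2 * (k:ℝ) * β)) k, one_div]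
end

section
/- Let q be a nonnegative integer and let s, μ, ν be real numbers with μ > 0, (2q+1)ν > −1 and s > (2q+1)νμ. Then ∫_0^∞ e^{−sx}·( ∑_{ℓ=0}^{q} C(2q+1, ℓ)·cosh((2q+1 − 2ℓ)μx) )^ν dx = 2^{−ν} · ∑_{k=0}^{∞} ( (−1)^k / k! ) · ( ∏_{j=0}^{k-1} (−(2q+1)ν + j) ) · 1/(s − (2q+1)νμ + 2kμ), where the infinite series on the right converges absolutely. (This series is the hypergeometric value ₂F₁(−(2q+1)ν, s/(2μ) − (2q+1)ν/2; s/(2μ) − (2q+1)ν/2 + 1; −1) divided by (s − (2q+1)νμ).) -/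
open Finset MeasureTheory Real

noncomputable def bcoef (α : ℝ) (k : ℕ) : ℝ :=
  (∏ j ∈ Finset.range k, (α - j)) / (Nat.factorial k)

lemma bcoef_zero (α : ℝ) : bcoef α 0 = 1 := by simp [bcoef]

lemma bcoef_succ (α : ℝ) (k : ℕ) :
    bcoef α (k + 1) = bcoef α k * ((α - k) / (k + 1)) := by
  rw [bcoef, bcoef, Finset.prod_range_succ, Nat.factorial_succ, div_mul_div_comm]
  push_cast
  ring

/-- Bernoulli for nonpositive exponents. -/
lemma bernoulli_neg {t p : ℝ} (ht : 0 ≤ t) (hp : 0 ≤ p) :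
    1 - p * t ≤ (1 + t) ^ (-p) := by
  have h1t : (0:ℝ) < 1 + t := by linarith
  rcases le_or_gt (1 - p * t) 0 with h0 | h0
  · exact h0.trans (Real.rpow_nonneg h1t.le _)
  rcases le_or_gt 1 p with hp1 | hp1
  · have hs : (-1 : ℝ) ≤ -t / (1 + t) := by
      rw [neg_div, neg_le_neg_iff, div_le_one h1t]; linarith
    have h := one_add_mul_self_le_rpow_one_add hs hp1
    have e1 : (1 : ℝ) + -t / (1 + t) = (1 + t)⁻¹ := by field_simp; ring
    rw [e1, Real.inv_rpow h1t.le, ← Real.rpow_neg h1t.le] at h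
    have e2 : 1 + p * (-t / (1 + t)) - (1 - p * t) = p * t ^ 2 / (1 + t) := by
      field_simp; ring
    have e3 : 0 ≤ p * t ^ 2 / (1 + t) := by positivity
    linarith
  · have hb : (1 + t) ^ p ≤ 1 + p * t :=
      rpow_one_add_le_one_add_mul_self (by linarith) hp hp1.le
    rw [Real.rpow_neg h1t.le, inv_eq_one_div,
      le_div_iff₀ (Real.rpow_pos_of_pos h1t p)]
    have h2 : (1 - p * t) * (1 + t) ^ p ≤ (1 - p * t) * (1 + p * t) :=
      mul_le_mul_of_nonneg_left hb h0.le
    nlinarith [sq_nonneg (p * t)]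

lemma bcoef_def (α : ℝ) (k : ℕ) :
    bcoef α k = (∏ j ∈ Finset.range k, (α - j)) / (Nat.factorial k) := rfl

lemma bcoef_key (α : ℝ) (hα : -1 < α) (k : ℕ) (hk : α ≤ k) :
    |bcoef α (k + 1)| * ((k : ℝ) + 2) ^ (1 + α) ≤
      |bcoef α k| * ((k : ℝ) + 1) ^ (1 + α) := by
  have hk1 : (0:ℝ) < (k:ℝ) + 1 := by positivity
  have hk2 : (0:ℝ) < (k:ℝ) + 2 := by positivity
  have habs : |bcoef α (k+1)| = |bcoef α k| * (((k:ℝ) - α) / ((k:ℝ) + 1)) := by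
    have h1 : |α - (k:ℝ)| = (k:ℝ) - α := by
      rw [abs_sub_comm]; exact abs_of_nonneg (by linarith)
    rw [bcoef_succ, abs_mul, abs_div, h1, abs_of_pos hk1]
  have hber := bernoulli_neg (t := 1 / ((k:ℝ)+1)) (p := 1 + α) (by positivity) (by linarith)
  have e1 : (1:ℝ) + 1 / ((k:ℝ)+1) = ((k:ℝ)+2) / ((k:ℝ)+1) := by field_simp; ring
  have e2 : (1:ℝ) - (1+α) * (1/((k:ℝ)+1)) = ((k:ℝ) - α) / ((k:ℝ)+1) := by field_simp; ring
  rw [e1, e2] at hber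
  have e3 : (((k:ℝ)+2) / ((k:ℝ)+1)) ^ (-(1+α)) =
      ((k:ℝ)+1) ^ (1+α) / ((k:ℝ)+2) ^ (1+α) := by
    rw [Real.rpow_neg (by positivity), ← Real.inv_rpow (by positivity), inv_div,
      Real.div_rpow hk1.le hk2.le]
  rw [e3] at hber
  have hp2 : (0:ℝ) < ((k:ℝ)+2)^(1+α) := Real.rpow_pos_of_pos hk2 _
  have hstep : ((k:ℝ) - α) / ((k:ℝ)+1) * ((k:ℝ)+2) ^ (1+α) ≤ ((k:ℝ)+1) ^ (1+α) := by
    have := mul_le_mul_of_nonneg_right hber hp2.le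
    rwa [div_mul_cancel₀ _ hp2.ne'] at this
  rw [habs, mul_assoc]
  exact mul_le_mul_of_nonneg_left hstep (abs_nonneg _)

lemma bcoef_decay (α : ℝ) (hα : -1 < α) :
    ∃ C : ℝ, 0 < C ∧ ∀ k : ℕ, |bcoef α k| ≤ C * ((k : ℝ) + 1) ^ (-(1 + α)) := by
  set m := ⌈α⌉₊ with hm
  have hαm : α ≤ (m : ℝ) := Nat.le_ceil α
  set C : ℝ := 1 + ∑ k ∈ Finset.range (m + 1), |bcoef α k| * ((k : ℝ) + 1) ^ (1 + α) with hC
  have hterm : ∀ k : ℕ, 0 ≤ |bcoef α k| * ((k : ℝ) + 1) ^ (1 + α) := fun k => by positivity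
  have hCpos : 0 < C := by
    have : 0 ≤ ∑ k ∈ Finset.range (m + 1), |bcoef α k| * ((k : ℝ) + 1) ^ (1 + α) :=
      Finset.sum_nonneg fun k _ => hterm k
    linarith
  have hmono : ∀ n : ℕ, |bcoef α (m + n)| * ((m + n : ℕ) + 1 : ℝ) ^ (1 + α) ≤
      |bcoef α m| * ((m : ℝ) + 1) ^ (1 + α) := by
    intro n
    induction n with
    | zero => simp
    | succ n ih =>
      refine le_trans ?_ ih
      have hk : α ≤ ((m + n : ℕ) : ℝ) := by
        push_cast; have : (0:ℝ) ≤ n := Nat.cast_nonneg n; linarith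
      have := bcoef_key α hα (m + n) hk
      calc |bcoef α (m + (n+1))| * (((m + (n+1) : ℕ)) + 1 : ℝ) ^ (1 + α)
          = |bcoef α ((m+n) + 1)| * (((m+n : ℕ) : ℝ) + 2) ^ (1 + α) := by
            push_cast; ring_nf
        _ ≤ |bcoef α (m+n)| * (((m+n : ℕ) : ℝ) + 1) ^ (1 + α) := this
        _ = |bcoef α (m + n)| * ((m + n : ℕ) + 1 : ℝ) ^ (1 + α) := by push_cast; ring_nf
  have hbound : ∀ k : ℕ, |bcoef α k| * ((k : ℝ) + 1) ^ (1 + α) ≤ C := by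
    intro k
    rcases le_or_gt k m with hkm | hkm
    · have h1 : |bcoef α k| * ((k : ℝ) + 1) ^ (1 + α) ≤
          ∑ j ∈ Finset.range (m + 1), |bcoef α j| * ((j : ℝ) + 1) ^ (1 + α) :=
        Finset.single_le_sum (fun j _ => hterm j) (Finset.mem_range.mpr (by omega))
      linarith
    · obtain ⟨n, rfl⟩ : ∃ n, k = m + n := ⟨k - m, by omega⟩
      refine (hmono n).trans ?_
      have h1 : |bcoef α m| * ((m : ℝ) + 1) ^ (1 + α) ≤
          ∑ j ∈ Finset.range (m + 1), |bcoef α j| * ((j : ℝ) + 1) ^ (1 + α) :=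
        Finset.single_le_sum (fun j _ => hterm j) (Finset.mem_range.mpr (by omega))
      linarith
  refine ⟨C, hCpos, fun k => ?_⟩
  have hk1 : (0:ℝ) < ((k:ℝ) + 1) ^ (1 + α) := Real.rpow_pos_of_pos (by positivity) _
  rw [Real.rpow_neg (by positivity), ← div_eq_mul_inv, le_div_iff₀ hk1]
  exact hbound k

lemma bcoef_bounded (α : ℝ) (hα : -1 < α) :
    ∃ C : ℝ, 0 < C ∧ ∀ k : ℕ, |bcoef α k| ≤ C := by
  obtain ⟨C, hC, h⟩ := bcoef_decay α hα
  refine ⟨C, hC, fun k => (h k).trans ?_⟩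
  calc C * ((k : ℝ) + 1) ^ (-(1 + α)) ≤ C * 1 := by
        refine mul_le_mul_of_nonneg_left ?_ hC.le
        exact Real.rpow_le_one_of_one_le_of_nonpos (by push_cast; linarith [Nat.cast_nonneg (α := ℝ) k]) (by linarith)
    _ = C := mul_one C

lemma summable_geo_aux {r : ℝ} (h1 : |r| < 1) :
    Summable (fun n : ℕ => ((n : ℝ) + 1) * r ^ n) := by
  have h := summable_pow_mul_geometric_of_norm_lt_one (R := ℝ) 1 (by simpa using h1)
  have h2 : Summable (fun n : ℕ => r ^ n) := summable_geometric_of_norm_lt_one (by simpa using h1)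
  have := h.add h2
  refine this.congr fun n => ?_
  push_cast
  ring

lemma binom_hasSum (α : ℝ) (hα : -1 < α) {t : ℝ} (h0 : 0 ≤ t) (h1 : t < 1) :
    HasSum (fun k : ℕ => bcoef α k * t ^ k) ((1 + t) ^ α) := by
  obtain ⟨C, hC, hCb⟩ := bcoef_bounded α hα
  set r : ℝ := (1 + t) / 2 with hr
  have hrt : t < r := by rw [hr]; linarith
  have hr0 : (0:ℝ) < r := by rw [hr]; linarith
  have hr2 : (1:ℝ) ≤ 2 * r := by rw [hr]; linarith
  have hr1 : r < 1 := by rw [hr]; linarith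
  set T : Set ℝ := Set.Ioo (-r) r with hT
  have hTo : IsOpen T := isOpen_Ioo
  have hTc : IsPreconnected T := isPreconnected_Ioo
  have h0T : (0:ℝ) ∈ T := ⟨by linarith, hr0⟩
  have htT : t ∈ T := ⟨by linarith, hrt⟩
  have hyb : ∀ y ∈ T, |y| ≤ r := fun y hy => (abs_lt.mpr ⟨hy.1, hy.2⟩).le
  set u : ℕ → ℝ := fun n => (2 * C) * (((n : ℝ) + 1) * r ^ n) with hu_def
  have hu : Summable u := (summable_geo_aux (by rwa [abs_of_pos hr0])).mul_left _
  set g : ℕ → ℝ → ℝ := fun n y => bcoef α n * y ^ n with hg_def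
  set g' : ℕ → ℝ → ℝ := fun n y => bcoef α n * ((n : ℕ) * y ^ (n - 1)) with hg'_def
  have hg : ∀ n : ℕ, ∀ y : ℝ, y ∈ T → HasDerivAt (g n) (g' n y) y := fun n y _ =>
    (hasDerivAt_pow n y).const_mul _
  have hbound : ∀ n : ℕ, ∀ y : ℝ, y ∈ T → ‖g' n y‖ ≤ u n := by
    intro n y hy
    have hyr := hyb y hy
    match n with
    | 0 =>
      have h00 : g' 0 y = 0 := by simp [hg'_def]
      rw [h00, norm_zero]
      simp only [hu_def]
      positivity
    | Nat.succ m =>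
      have e : g' (m+1) y = bcoef α (m+1) * (((m:ℝ)+1) * y ^ m) := by
        simp only [hg'_def, Nat.succ_sub_one]
        push_cast
        ring
      rw [e, Real.norm_eq_abs, abs_mul, abs_mul, abs_pow,
        abs_of_nonneg (by positivity : (0:ℝ) ≤ (m:ℝ)+1)]
      have h1' : |bcoef α (m+1)| * (((m:ℝ)+1) * |y| ^ m) ≤ C * (((m:ℝ)+1) * r ^ m) := by
        apply mul_le_mul (hCb _) ?_ (by positivity) hC.le
        exact mul_le_mul_of_nonneg_left (pow_le_pow_left₀ (abs_nonneg _) hyr m) (by positivity)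
      refine h1'.trans ?_
      have : C * (((m:ℝ)+1) * r ^ m) ≤ (2*C) * (((m:ℝ)+1) * (r * r ^ m)) := by
        have : ((m:ℝ)+1) * r^m * 1 ≤ ((m:ℝ)+1) * r^m * (2*r) :=
          mul_le_mul_of_nonneg_left hr2 (by positivity)
        nlinarith [pow_nonneg hr0.le m, (by positivity : (0:ℝ) ≤ ((m:ℝ)+1))]
      refine this.trans ?_
      have e2 : u (m+1) - 2*C*(((m:ℝ)+1)*(r*r^m)) = 2*C*r^(m+1) := by
        simp only [hu_def, pow_succ]
        push_cast
        ring
      have e3 : (0:ℝ) ≤ 2*C*r^(m+1) := by positivity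
      show 2 * C * (((m:ℝ) + 1) * (r * r ^ m)) ≤ u (m + 1)
      linarith
  have hg0 : Summable fun n => g n 0 := by
    apply summable_of_ne_finset_zero (s := {0})
    intro n hn
    have : n ≠ 0 := by simpa using hn
    simp [hg_def, zero_pow this]
  set G : ℝ → ℝ := fun z => ∑' n, g n z with hG_def
  have hG : ∀ y ∈ T, HasDerivAt G (∑' n, g' n y) y := fun y hy =>
    hasDerivAt_tsum_of_isPreconnected hu hTo hTc hg hbound h0T hg0 hy
  have hsum2 : ∀ y ∈ T, Summable fun n => g' n y := fun y hy =>
    Summable.of_norm_bounded hu (fun n => hbound n y hy)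
  have hsum1 : ∀ y ∈ T, Summable fun n => g n y := by
    intro y hy
    refine Summable.of_norm_bounded (g := fun n => C * r ^ n)
      ((summable_geometric_of_norm_lt_one (by simpa [abs_of_pos hr0] using hr1)).mul_left C) ?_
    intro n
    simp only [hg_def, norm_mul, norm_pow, Real.norm_eq_abs]
    exact mul_le_mul (hCb n) (pow_le_pow_left₀ (abs_nonneg _) (hyb y hy) n) (by positivity) hC.le
  -- the ODE
  have hODE : ∀ y ∈ T, (1 + y) * (∑' n, g' n y) = α * G y := by
    intro y hy
    have hS := hsum2 y hy
    have hSs : Summable fun n => g' (n + 1) y := (summable_nat_add_iff 1).mpr hS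
    have hterm : ∀ n : ℕ, g' (n+1) y = bcoef α n * (α - n) * y ^ n := by
      intro n
      have hne : ((n:ℝ) + 1) ≠ 0 := by positivity
      simp only [hg'_def, bcoef_succ]
      push_cast
      field_simp
    have hshift : ∑' n, g' n y = ∑' n, bcoef α n * (α - n) * y ^ n := by
      rw [Summable.tsum_eq_zero_add hS]
      have h00 : g' 0 y = 0 := by simp [hg'_def]
      rw [h00, zero_add]
      exact tsum_congr hterm
    have hmulterm : ∀ n : ℕ, y * g' n y = bcoef α n * (n : ℝ) * y ^ n := by
      intro n
      match n with
      | 0 => simp [hg'_def]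
      | Nat.succ m =>
        simp only [hg'_def, Nat.succ_sub_one, Nat.succ_eq_add_one, pow_succ]
        push_cast
        ring
    have hmul : y * (∑' n, g' n y) = ∑' n, bcoef α n * (n : ℝ) * y ^ n := by
      rw [← tsum_mul_left]
      exact tsum_congr hmulterm
    have hs3 : Summable fun n => bcoef α n * (α - n) * y ^ n :=
      hSs.congr fun n => (hterm n)
    have hs4 : Summable fun n => bcoef α n * (n:ℝ) * y ^ n :=
      (hS.mul_left y).congr fun n => (hmulterm n)
    calc (1 + y) * (∑' n, g' n y)
        = (∑' n, g' n y) + y * (∑' n, g' n y) := by ring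
      _ = (∑' n, bcoef α n * (α - n) * y ^ n) + ∑' n, bcoef α n * (n:ℝ) * y ^ n := by
          rw [hmul, hshift]
      _ = ∑' n, (bcoef α n * (α - n) * y ^ n + bcoef α n * (n:ℝ) * y ^ n) :=
          (Summable.tsum_add hs3 hs4).symm
      _ = ∑' n, α * (bcoef α n * y ^ n) := by
          apply tsum_congr; intro n; ring
      _ = α * G y := by rw [tsum_mul_left]
  -- derivative of the quotient is zero
  have hqd : ∀ y ∈ T, HasDerivAt (fun z => G z * (1 + z) ^ (-α)) 0 y := by
    intro y hy
    have hy' := hy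
    simp only [hT, Set.mem_Ioo] at hy'
    have h1y : (0:ℝ) < 1 + y := by linarith [hy'.1]
    have hbase : HasDerivAt (fun z : ℝ => 1 + z) 1 y := by
      simpa using (hasDerivAt_id y).const_add (1:ℝ)
    have hd2 : HasDerivAt (fun z : ℝ => (1 + z) ^ (-α)) (-α * (1 + y) ^ (-α - 1)) y := by
      have := (Real.hasDerivAt_rpow_const (x := 1 + y) (p := -α) (Or.inl h1y.ne')).comp y hbase
      simpa [Function.comp_def] using this
    have hprod := (hG y hy).mul hd2
    refine hprod.congr_deriv ?_
    have e1 : (1 + y) ^ (-α) = (1 + y) ^ (-α - 1) * (1 + y) := by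
      rw [← Real.rpow_add_one h1y.ne' (-α - 1)]
      norm_num
    rw [e1]
    linear_combination ((1 + y) ^ (-α - 1)) * (hODE y hy)
  -- constancy on [0, t]
  have hsub : Set.Icc (0:ℝ) t ⊆ T := by
    intro x hx
    exact ⟨by linarith [hx.1], by linarith [hx.2]⟩
  have hconst := constant_of_has_deriv_right_zero
    (f := fun z => G z * (1 + z) ^ (-α)) (a := 0) (b := t)
    (fun x hx => ((hqd x (hsub hx)).continuousAt).continuousWithinAt)
    (fun x hx => ((hqd x (hsub (Set.mem_Icc_of_Ico hx))).hasDerivWithinAt))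
  have hG0 : G 0 = 1 := by
    have e : G 0 = ∑' n, g n 0 := rfl
    rw [e, tsum_eq_single 0 (fun n hn => by simp [hg_def, zero_pow hn])]
    simp [hg_def, bcoef_zero]
  have h1t : (0:ℝ) < 1 + t := by linarith
  have hval : G t * (1 + t) ^ (-α) = 1 := by
    have h := hconst t (Set.right_mem_Icc.mpr h0)
    rw [h, hG0, one_mul, add_zero, Real.one_rpow]
  have hGt : G t = (1 + t) ^ α := by
    have h3 : G t * ((1 + t) ^ (-α) * (1 + t) ^ α) = (1 + t) ^ α := by
      rw [← mul_assoc, hval, one_mul]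
    rwa [← Real.rpow_add h1t, neg_add_cancel, Real.rpow_zero, mul_one] at h3
  have hfin := (hsum1 t htT).hasSum
  have e2 : (∑' n, g n t) = (1 + t) ^ α := hGt
  rw [e2] at hfin
  exact hfin

lemma cosh_sum (q : ℕ) (t : ℝ) :
    ∑ l ∈ Finset.range (q + 1),
        (Nat.choose (2 * q + 1) l : ℝ) * Real.cosh ((2 * (q : ℝ) + 1 - 2 * (l : ℝ)) * t)
      = 2 ^ (2 * q) * Real.cosh t ^ (2 * q + 1) := by
  set n : ℕ := 2 * q + 1 with hn
  set f : ℕ → ℝ := fun k =>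
    (Nat.choose n k : ℝ) * Real.exp ((2 * (k : ℝ) - (n : ℝ)) * t) with hf
  have hA : (Real.exp t + Real.exp (-t)) ^ n = ∑ k ∈ Finset.range (n + 1), f k := by
    rw [add_pow]
    apply Finset.sum_congr rfl
    intro k hk
    have hk' : k ≤ n := by
      have := Finset.mem_range.mp hk; omega
    rw [← Real.exp_nat_mul, ← Real.exp_nat_mul, ← Real.exp_add]
    simp only [hf]
    rw [mul_comm ((Nat.choose n k : ℝ)) _]
    congr 2
    push_cast [Nat.cast_sub hk']
    ring
  have hB : ∑ k ∈ Finset.range (n + 1), f k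
      = ∑ l ∈ Finset.range (q + 1), (f l + f (n - l)) := by
    have hsplit : ∑ k ∈ Finset.range ((q + 1) + (q + 1)), f k
        = ∑ k ∈ Finset.range (q + 1), f k + ∑ k ∈ Finset.range (q + 1), f ((q + 1) + k) := by
      exact Finset.sum_range_add f (q + 1) (q + 1)
    have hrefl : ∑ k ∈ Finset.range (q + 1), f ((q + 1) + k)
        = ∑ k ∈ Finset.range (q + 1), f (n - k) := by
      rw [← Finset.sum_range_reflect (fun k => f ((q + 1) + k)) (q + 1)]
      apply Finset.sum_congr rfl
      intro k hk
      have hk' : k ≤ q := by have := Finset.mem_range.mp hk; omega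
      congr 1
      omega
    rw [show n + 1 = (q + 1) + (q + 1) by omega, hsplit, hrefl, ← Finset.sum_add_distrib]
  have hC : ∀ l ∈ Finset.range (q + 1),
      f l + f (n - l)
        = (Nat.choose n l : ℝ) * (2 * Real.cosh ((2 * (q : ℝ) + 1 - 2 * (l : ℝ)) * t)) := by
    intro l hl
    have hl' : l ≤ q := by have := Finset.mem_range.mp hl; omega
    have hln : l ≤ n := by omega
    have hch : (Nat.choose n (n - l) : ℝ) = (Nat.choose n l : ℝ) := by
      rw [Nat.choose_symm hln]
    have hcast : ((n - l : ℕ) : ℝ) = (n : ℝ) - (l : ℝ) := by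
      push_cast [Nat.cast_sub hln]; ring
    have he1 : (2 * ((n - l : ℕ) : ℝ) - (n : ℝ)) * t
        = -((2 * (l : ℝ) - (n : ℝ)) * t) := by rw [hcast]; ring
    rw [hf]
    simp only
    rw [hch, he1, ← mul_add]
    congr 1
    rw [Real.cosh_eq]
    have : (2 * (q : ℝ) + 1 - 2 * (l : ℝ)) * t = -((2 * (l : ℝ) - (n : ℝ)) * t) := by
      rw [hn]; push_cast; ring
    rw [this, Real.exp_neg, neg_neg]
    field_simp
    ring
  rw [Finset.sum_congr rfl hC] at hB
  have hcosh : Real.exp t + Real.exp (-t) = 2 * Real.cosh t := by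
    rw [Real.cosh_eq]; ring
  have hmain : ∑ l ∈ Finset.range (q + 1),
      (Nat.choose n l : ℝ) * (2 * Real.cosh ((2 * (q : ℝ) + 1 - 2 * (l : ℝ)) * t))
      = (2 * Real.cosh t) ^ n := by
    rw [← hB, ← hA, hcosh]
  have h2 : (2 * Real.cosh t) ^ n = 2 ^ n * Real.cosh t ^ n := by rw [mul_pow]
  have hfinal : (2:ℝ) * ∑ l ∈ Finset.range (q + 1),
      (Nat.choose n l : ℝ) * Real.cosh ((2 * (q : ℝ) + 1 - 2 * (l : ℝ)) * t)
      = 2 * (2 ^ (2 * q) * Real.cosh t ^ n) := by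
    rw [Finset.mul_sum]
    calc ∑ l ∈ Finset.range (q + 1),
        2 * ((Nat.choose n l : ℝ) * Real.cosh ((2 * (q : ℝ) + 1 - 2 * (l : ℝ)) * t))
        = ∑ l ∈ Finset.range (q + 1),
          (Nat.choose n l : ℝ) * (2 * Real.cosh ((2 * (q : ℝ) + 1 - 2 * (l : ℝ)) * t)) := by
          apply Finset.sum_congr rfl; intro l _; ring
      _ = 2 ^ n * Real.cosh t ^ n := by rw [hmain, h2]
      _ = 2 * (2 ^ (2 * q) * Real.cosh t ^ n) := by
          rw [hn, pow_succ]; ring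
  have := mul_left_cancel₀ (two_ne_zero (α := ℝ)) hfinal
  simpa [hn] using this

lemma integral_exp_neg_mul_Ioi0 {c : ℝ} (hc : 0 < c) :
    ∫ x in Set.Ioi (0:ℝ), Real.exp (-(c * x)) = 1 / c := by
  have h := integral_comp_mul_left_Ioi (fun y => Real.exp (-y)) 0 hc
  simp only [mul_zero, integral_exp_neg_Ioi, neg_zero, Real.exp_zero, smul_eq_mul,
    mul_one] at h
  rw [h, one_div]

theorem stmt_7 (q : ℕ) (s μ ν : ℝ) (hμ : 0 < μ)
    (hν : (2 * (q : ℝ) + 1) * ν > -1) (hs : s > (2 * (q : ℝ) + 1) * ν * μ) :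
    (Summable fun k : ℕ =>
        |((-1 : ℝ) ^ k / (Nat.factorial k : ℝ)) *
          (∏ j ∈ Finset.range k, (-((2 * (q : ℝ) + 1) * ν) + (j : ℝ))) *
          (1 / (s - (2 * (q : ℝ) + 1) * ν * μ + 2 * (k : ℝ) * μ))|) ∧
    (∫ x in Set.Ioi (0 : ℝ),
        Real.exp (-s * x) *
          (∑ l ∈ Finset.range (q + 1),
              (Nat.choose (2 * q + 1) l : ℝ) *
                Real.cosh ((2 * (q : ℝ) + 1 - 2 * (l : ℝ)) * (μ * x))) ^ ν)
    = 2 ^ (-ν) *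
        ∑' k : ℕ,
          ((-1 : ℝ) ^ k / (Nat.factorial k : ℝ)) *
            (∏ j ∈ Finset.range k, (-((2 * (q : ℝ) + 1) * ν) + (j : ℝ))) *
            (1 / (s - (2 * (q : ℝ) + 1) * ν * μ + 2 * (k : ℝ) * μ)) := by
  set α : ℝ := (2 * (q : ℝ) + 1) * ν with hα_def
  have hα : -1 < α := hν
  have hβ : 0 < s - α * μ := by linarith
  set β : ℝ := s - α * μ with hβ_def
  have hck : ∀ k : ℕ, 0 < β + 2 * (k : ℝ) * μ := by
    intro k
    have : (0:ℝ) ≤ 2 * (k : ℝ) * μ := by positivity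
    linarith
  -- rewrite the statement's term
  have hTk : ∀ k : ℕ,
      ((-1 : ℝ) ^ k / (Nat.factorial k : ℝ)) *
          (∏ j ∈ Finset.range k, (-((2 * (q : ℝ) + 1) * ν) + (j : ℝ))) *
          (1 / (s - (2 * (q : ℝ) + 1) * ν * μ + 2 * (k : ℝ) * μ))
        = bcoef α k * (1 / (β + 2 * (k : ℝ) * μ)) := by
    intro k
    have hprod : (∏ j ∈ Finset.range k, (-((2 * (q : ℝ) + 1) * ν) + (j : ℝ)))
        = (-1) ^ k * ∏ j ∈ Finset.range k, (α - j) := by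
      calc (∏ j ∈ Finset.range k, (-((2 * (q : ℝ) + 1) * ν) + (j : ℝ)))
          = ∏ j ∈ Finset.range k, ((-1) * (α - j)) := by
            apply Finset.prod_congr rfl
            intro j _
            simp only [hα_def]
            ring
        _ = (∏ _j ∈ Finset.range k, (-1 : ℝ)) * ∏ j ∈ Finset.range k, (α - j) :=
            Finset.prod_mul_distrib
        _ = (-1) ^ k * ∏ j ∈ Finset.range k, (α - j) := by
            rw [Finset.prod_const, Finset.card_range]
    have h1 : ((-1:ℝ)) ^ k * ((-1:ℝ)) ^ k = 1 := by
      rw [← mul_pow]; norm_num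
    have hsm : s - (2 * (q : ℝ) + 1) * ν * μ + 2 * (k : ℝ) * μ = β + 2 * (k : ℝ) * μ := by
      simp only [hβ_def, hα_def]
    rw [hprod, bcoef_def, hsm, div_mul_eq_mul_div, ← mul_assoc, h1, one_mul]
  -- summability
  have hsummable : Summable (fun k : ℕ => |bcoef α k| * (1 / (β + 2 * (k : ℝ) * μ))) := by
    obtain ⟨C, hC, hCd⟩ := bcoef_decay α hα
    set K : ℝ := max (1 / β) (1 / μ) with hK
    have hK0 : 0 < K := lt_max_of_lt_left (by positivity)
    have hkey : ∀ k : ℕ, ((k : ℝ) + 1) ≤ K * (β + 2 * (k : ℝ) * μ) := by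
      intro k
      have h1 : 1 ≤ K * β := by
        have : 1 / β ≤ K := le_max_left _ _
        calc (1:ℝ) = (1/β) * β := by field_simp
          _ ≤ K * β := by exact mul_le_mul_of_nonneg_right this hβ.le
      have h2 : (k : ℝ) ≤ K * (2 * (k : ℝ) * μ) := by
        have : 1 / μ ≤ K := le_max_right _ _
        have h3 : (k:ℝ) * 1 ≤ (k:ℝ) * (2 * (K * μ)) := by
          apply mul_le_mul_of_nonneg_left ?_ (Nat.cast_nonneg k)
          have : (1:ℝ) = (1/μ) * μ := by field_simp
          nlinarith [mul_le_mul_of_nonneg_right (le_max_right (1/β) (1/μ)) hμ.le]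
        nlinarith
      nlinarith
    refine Summable.of_nonneg_of_le
      (f := fun k : ℕ => (C * K) * ((k : ℝ) + 1) ^ (-(2 + α)))
      (fun k => mul_nonneg (abs_nonneg _) (div_nonneg zero_le_one (hck k).le))
      (fun k => ?_) ?_
    · 
      have hpos := hck k
      have hsplit : ((k:ℝ) + 1) ^ (-(1 + α)) = ((k:ℝ) + 1) ^ (-(2 + α)) * ((k:ℝ) + 1) := by
        rw [← Real.rpow_add_one (by positivity : ((k:ℝ)+1) ≠ 0) (-(2+α))]
        congr 1
        ring
      calc |bcoef α k| * (1 / (β + 2 * (k : ℝ) * μ))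
          ≤ (C * ((k:ℝ)+1) ^ (-(1+α))) * (1 / (β + 2 * (k : ℝ) * μ)) := by
            apply mul_le_mul_of_nonneg_right (hCd k) (by positivity)
        _ = C * ((k:ℝ)+1) ^ (-(2+α)) * (((k:ℝ)+1) / (β + 2 * (k : ℝ) * μ)) := by
            rw [hsplit]; ring
        _ ≤ C * ((k:ℝ)+1) ^ (-(2+α)) * K := by
            apply mul_le_mul_of_nonneg_left ?_ (by positivity)
            rw [div_le_iff₀ hpos]
            exact hkey k
        _ = (C * K) * ((k : ℝ) + 1) ^ (-(2 + α)) := by ring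
    · have hbase : Summable (fun n : ℕ => ((n : ℝ)) ^ (-(2 + α))) := by
        rw [Real.summable_nat_rpow]
        linarith
      have := (summable_nat_add_iff 1).mpr hbase
      have h2 : Summable (fun n : ℕ => ((n : ℝ) + 1) ^ (-(2 + α))) := by
        refine this.congr fun n => ?_
        push_cast
        ring_nf
      exact h2.mul_left _
  have hsum_abs : Summable (fun k : ℕ =>
      |((-1 : ℝ) ^ k / (Nat.factorial k : ℝ)) *
        (∏ j ∈ Finset.range k, (-((2 * (q : ℝ) + 1) * ν) + (j : ℝ))) *
        (1 / (s - (2 * (q : ℝ) + 1) * ν * μ + 2 * (k : ℝ) * μ))|) := by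
    refine hsummable.congr fun k => ?_
    rw [hTk k, abs_mul, abs_of_pos (by positivity : (0:ℝ) < 1 / (β + 2 * (k : ℝ) * μ))]
  refine ⟨hsum_abs, ?_⟩
  set F : ℕ → ℝ → ℝ := fun k x => bcoef α k * Real.exp (-((β + 2 * (k:ℝ) * μ) * x)) with hF_def
  -- pointwise identity on Ioi 0
  have hpoint : ∀ x ∈ Set.Ioi (0:ℝ),
      Real.exp (-s * x) *
          (∑ l ∈ Finset.range (q + 1),
              (Nat.choose (2 * q + 1) l : ℝ) *
                Real.cosh ((2 * (q : ℝ) + 1 - 2 * (l : ℝ)) * (μ * x))) ^ ν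
        = (2:ℝ) ^ (-ν) * ∑' k, F k x := by
    intro x hx
    rw [Set.mem_Ioi] at hx
    set t : ℝ := Real.exp (-(2 * μ * x)) with ht_def
    have ht0 : 0 < t := Real.exp_pos _
    have ht1 : t < 1 := by
      rw [ht_def, Real.exp_lt_one_iff]
      nlinarith
    have hHS := binom_hasSum α hα ht0.le ht1
    have hts := hHS.tsum_eq
    have hcoshpos : 0 < Real.cosh (μ * x) := Real.cosh_pos _
    have step1 := cosh_sum q (μ * x)
    have step2 : ((2:ℝ) ^ (2 * q) * Real.cosh (μ * x) ^ (2 * q + 1)) ^ ν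
        = (2:ℝ) ^ ((2 * (q:ℝ)) * ν) * Real.cosh (μ * x) ^ α := by
      rw [Real.mul_rpow (by positivity) (by positivity)]
      congr 1
      · rw [← Real.rpow_natCast 2 (2 * q), ← Real.rpow_mul (by norm_num : (0:ℝ) ≤ 2)]
        congr 1
        push_cast
        ring
      · rw [← Real.rpow_natCast (Real.cosh (μ * x)) (2 * q + 1),
          ← Real.rpow_mul hcoshpos.le]
        congr 1
        simp only [hα_def]
        push_cast
        ring
    have step3 : Real.cosh (μ * x) = Real.exp (μ * x) * (1 + t) / 2 := by
      have he : Real.exp (μ * x) * t = Real.exp (-(μ * x)) := by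
        rw [ht_def, ← Real.exp_add]
        congr 1
        ring
      rw [Real.cosh_eq, ← he]
      ring
    have step4 : Real.cosh (μ * x) ^ α
        = Real.exp ((μ * x) * α) * ((1 + t) ^ α / (2:ℝ) ^ α) := by
      rw [step3, mul_div_assoc,
        Real.mul_rpow (Real.exp_pos _).le (by positivity),
        Real.div_rpow (by positivity) (by norm_num), ← Real.exp_mul]
    have h2c : (2:ℝ) ^ ((2 * (q:ℝ)) * ν) / (2:ℝ) ^ α = (2:ℝ) ^ (-ν) := by
      rw [← Real.rpow_sub (by norm_num : (0:ℝ) < 2)]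
      congr 1
      simp only [hα_def]
      ring
    have hexp : Real.exp (-s * x) * Real.exp ((μ * x) * α) = Real.exp (-(β * x)) := by
      rw [← Real.exp_add]
      congr 1
      simp only [hβ_def]
      ring
    have step6 : Real.exp (-(β * x)) * (1 + t) ^ α = ∑' k, F k x := by
      rw [← hts, ← tsum_mul_left]
      apply tsum_congr
      intro k
      simp only [hF_def, ht_def]
      rw [← Real.exp_nat_mul]
      have he2 : Real.exp (-(β * x)) * Real.exp ((k:ℝ) * -(2 * μ * x))
          = Real.exp (-((β + 2 * (k:ℝ) * μ) * x)) := by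
        rw [← Real.exp_add]
        congr 1
        ring
      rw [← he2]
      ring
    calc Real.exp (-s * x) *
          (∑ l ∈ Finset.range (q + 1),
              (Nat.choose (2 * q + 1) l : ℝ) *
                Real.cosh ((2 * (q : ℝ) + 1 - 2 * (l : ℝ)) * (μ * x))) ^ ν
        = Real.exp (-s * x) * ((2:ℝ) ^ (2 * q) * Real.cosh (μ * x) ^ (2 * q + 1)) ^ ν := by
          rw [step1]
      _ = Real.exp (-s * x) * ((2:ℝ) ^ ((2 * (q:ℝ)) * ν) *
            (Real.exp ((μ * x) * α) * ((1 + t) ^ α / (2:ℝ) ^ α))) := by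
          rw [step2, step4]
      _ = ((2:ℝ) ^ ((2 * (q:ℝ)) * ν) / (2:ℝ) ^ α) *
            (Real.exp (-s * x) * Real.exp ((μ * x) * α)) * (1 + t) ^ α := by
          ring
      _ = (2:ℝ) ^ (-ν) * (Real.exp (-(β * x)) * (1 + t) ^ α) := by
          rw [h2c, hexp]
          ring
      _ = (2:ℝ) ^ (-ν) * ∑' k, F k x := by rw [step6]
  -- integrability of each term
  have hInt : ∀ k : ℕ, Integrable (F k) (volume.restrict (Set.Ioi (0:ℝ))) := by
    intro k
    have h := (exp_neg_integrableOn_Ioi 0 (hck k)).const_mul (bcoef α k)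
    have heq : (fun x : ℝ => bcoef α k * Real.exp (-(β + 2 * (k:ℝ) * μ) * x)) = F k := by
      funext y
      simp only [hF_def, neg_mul]
    rwa [heq] at h
  have hIval : ∀ k : ℕ, ∫ x in Set.Ioi (0:ℝ), F k x = bcoef α k * (1 / (β + 2 * (k:ℝ) * μ)) := by
    intro k
    simp only [hF_def]
    rw [MeasureTheory.integral_const_mul, integral_exp_neg_mul_Ioi0 (hck k)]
  have hNval : ∀ k : ℕ, ∫ x in Set.Ioi (0:ℝ), ‖F k x‖
      = |bcoef α k| * (1 / (β + 2 * (k:ℝ) * μ)) := by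
    intro k
    simp only [hF_def, norm_mul, Real.norm_eq_abs, Real.abs_exp]
    rw [MeasureTheory.integral_const_mul, integral_exp_neg_mul_Ioi0 (hck k)]
  have hNorm : Summable (fun k : ℕ => ∫ x in Set.Ioi (0:ℝ), ‖F k x‖) :=
    hsummable.congr fun k => (hNval k).symm
  calc (∫ x in Set.Ioi (0 : ℝ),
        Real.exp (-s * x) *
          (∑ l ∈ Finset.range (q + 1),
              (Nat.choose (2 * q + 1) l : ℝ) *
                Real.cosh ((2 * (q : ℝ) + 1 - 2 * (l : ℝ)) * (μ * x))) ^ ν)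
      = ∫ x in Set.Ioi (0:ℝ), (2:ℝ) ^ (-ν) * ∑' k, F k x :=
        setIntegral_congr_fun measurableSet_Ioi hpoint
    _ = (2:ℝ) ^ (-ν) * ∫ x in Set.Ioi (0:ℝ), ∑' k, F k x := by
        rw [MeasureTheory.integral_const_mul]
    _ = (2:ℝ) ^ (-ν) * ∑' k, ∫ x in Set.Ioi (0:ℝ), F k x := by
        rw [← integral_tsum_of_summable_integral_norm hInt hNorm]
    _ = (2:ℝ) ^ (-ν) * ∑' k, bcoef α k * (1 / (β + 2 * (k:ℝ) * μ)) := by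
        congr 1
        exact tsum_congr hIval
    _ = 2 ^ (-ν) *
        ∑' k : ℕ,
          ((-1 : ℝ) ^ k / (Nat.factorial k : ℝ)) *
            (∏ j ∈ Finset.range k, (-((2 * (q : ℝ) + 1) * ν) + (j : ℝ))) *
            (1 / (s - (2 * (q : ℝ) + 1) * ν * μ + 2 * (k : ℝ) * μ)) := by
        congr 1
        exact (tsum_congr hTk).symm
end

section
/- Let α, β, p be real numbers with p > 0, β + α/p > 0 and β − α/p > 0. Then ∫_0^∞ cosh(2αt)/(cosh(pt))^{2β} dt = 4^{β−1}·p^{−1}·B(β + α/p, β − α/p). -/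
open MeasureTheory

/-- The real Beta function: B(a,b) = Γ(a)Γ(b)/Γ(a+b). -/
noncomputable def realBeta (a b : ℝ) : ℝ :=
  Real.Gamma a * Real.Gamma b / Real.Gamma (a + b)

lemma beta_integrand_integrable {a b : ℝ} (ha : 0 < a) (hb : 0 < b) :
    IntervalIntegrable (fun x : ℝ => x ^ (a - 1) * (1 - x) ^ (b - 1)) volume 0 1 := by
  have h := Complex.betaIntegral_convergent (u := (a : ℂ)) (v := (b : ℂ)) (by simpa) (by simpa)
  have h2 : IntervalIntegrable
      (fun x : ℝ => ((x : ℂ) ^ ((a : ℂ) - 1) * ((1 : ℂ) - x) ^ ((b : ℂ) - 1)).re) volume 0 1 :=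
    ⟨h.1.re, h.2.re⟩
  rw [intervalIntegrable_iff_integrableOn_Ioc_of_le zero_le_one] at h2 ⊢
  refine h2.congr_fun (fun x hx => ?_) measurableSet_Ioc
  have hx0 : (0:ℝ) ≤ x := hx.1.le
  have hx1 : (0:ℝ) ≤ 1 - x := by linarith [hx.2]
  beta_reduce
  rw [show ((a:ℂ) - 1) = ((a - 1 : ℝ) : ℂ) by push_cast; ring,
    show ((b:ℂ) - 1) = ((b - 1 : ℝ) : ℂ) by push_cast; ring,
    show ((1:ℂ) - x) = ((1 - x : ℝ) : ℂ) by push_cast; ring,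
    ← Complex.ofReal_cpow hx0, ← Complex.ofReal_cpow hx1, ← Complex.ofReal_mul,
    Complex.ofReal_re]

lemma realBeta_eq {a b : ℝ} (ha : 0 < a) (hb : 0 < b) :
    realBeta a b = ∫ x in (0:ℝ)..1, x ^ (a - 1) * (1 - x) ^ (b - 1) := by
  have hab : (0:ℝ) < a + b := by linarith
  have hΓ : Real.Gamma (a + b) ≠ 0 := (Real.Gamma_pos_of_pos hab).ne'
  have key := Complex.Gamma_mul_Gamma_eq_betaIntegral (s := (a:ℂ)) (t := (b:ℂ))
    (by simpa) (by simpa)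
  have hbeta : Complex.betaIntegral a b
      = ((∫ x in (0:ℝ)..1, x ^ (a - 1) * (1 - x) ^ (b - 1) : ℝ) : ℂ) := by
    rw [Complex.betaIntegral, ← intervalIntegral.integral_ofReal]
    refine intervalIntegral.integral_congr fun x hx => ?_
    rw [Set.uIcc_of_le zero_le_one] at hx
    rw [Complex.ofReal_mul, Complex.ofReal_cpow hx.1, Complex.ofReal_cpow (by linarith [hx.2] : (0:ℝ) ≤ 1 - x)]
    push_cast
    ring
  rw [hbeta] at key
  simp only [← Complex.ofReal_add, Complex.Gamma_ofReal, ← Complex.ofReal_mul] at key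
  rw [realBeta, div_eq_iff hΓ]
  have := Complex.ofReal_injective key
  linarith [this]


-- substitution y ↦ y/(1-y) : Ioo 0 (1/2) → Ioo 0 1
lemma subst_half (a b : ℝ) :
    ∫ x in Set.Ioo (0:ℝ) 1, (x ^ (a-1) + x ^ (b-1)) * (1+x) ^ (-(a+b))
    = ∫ y in Set.Ioo (0:ℝ) (1/2),
        (y^(a-1)*(1-y)^(b-1) + y^(b-1)*(1-y)^(a-1)) := by
  have himg : (fun y : ℝ => y / (1 - y)) '' Set.Ioo 0 (1/2) = Set.Ioo 0 1 := by
    ext x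
    constructor
    · rintro ⟨y, ⟨hy0, hy2⟩, rfl⟩
      have h1 : (0:ℝ) < 1 - y := by linarith
      constructor
      · positivity
      · rw [div_lt_one h1]; linarith
    · rintro ⟨hx0, hx1⟩
      refine ⟨x / (1 + x), ⟨by positivity, ?_⟩, ?_⟩
      · rw [div_lt_iff₀ (by linarith)]; linarith
      · have h1 : (0:ℝ) < 1 + x := by linarith
        field_simp
        ring
  have hderiv : ∀ y ∈ Set.Ioo (0:ℝ) (1/2),
      HasDerivWithinAt (fun y : ℝ => y / (1 - y)) (((1-y)^2)⁻¹) (Set.Ioo 0 (1/2)) y := by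
    intro y hy
    have h1 : (1:ℝ) - y ≠ 0 := by have := hy.2; intro h; rw [sub_eq_zero] at h; linarith
    have := (hasDerivAt_id y).div ((hasDerivAt_id y).const_sub 1) h1
    refine this.hasDerivWithinAt.congr_deriv ?_
    rw [inv_eq_one_div]
    congr 1 <;> simp only [id_eq] <;> ring
  have hinj : Set.InjOn (fun y : ℝ => y / (1 - y)) (Set.Ioo 0 (1/2)) := by
    intro y1 h1 y2 h2 h
    have e1 : (1:ℝ) - y1 ≠ 0 := by have := h1.2; intro h'; rw [sub_eq_zero] at h'; linarith
    have e2 : (1:ℝ) - y2 ≠ 0 := by have := h2.2; intro h'; rw [sub_eq_zero] at h'; linarith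
    field_simp at h
    linarith
  rw [← himg, integral_image_eq_integral_abs_deriv_smul measurableSet_Ioo hderiv hinj]
  refine setIntegral_congr_fun measurableSet_Ioo fun y hy => ?_
  obtain ⟨hy0, hy2⟩ := hy
  have hw : (0:ℝ) < 1 - y := by linarith
  have hfy : 1 + y / (1 - y) = (1 - y)⁻¹ := by field_simp; ring
  have hvy : ∀ c : ℝ, (y / (1 - y)) ^ c = y ^ c * (1-y) ^ (-c) := by
    intro c
    rw [div_eq_mul_inv, Real.mul_rpow hy0.le (by positivity), ← Real.rpow_neg_one,
      ← Real.rpow_mul hw.le]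
    norm_num
  rw [smul_eq_mul, hfy, hvy, hvy, Real.inv_rpow hw.le, ← Real.rpow_neg hw.le, abs_of_pos (by positivity)]
  rw [show ((1-y)^2)⁻¹ = (1-y) ^ (-2 : ℝ) by
    rw [← Real.rpow_natCast (1-y) 2, ← Real.rpow_neg hw.le]; norm_num]
  rw [neg_neg, add_mul, mul_add]
  rw [mul_assoc, mul_assoc, mul_comm (y ^ (a-1)) _, mul_comm (y ^ (b-1)) _]
  have h1 : (1-y)^(b-1) = (1-y)^(-2:ℝ) * ((1-y)^(-(a-1)) * (1-y)^(a+b)) := by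
    rw [← Real.rpow_add hw, ← Real.rpow_add hw]; congr 1; ring
  have h2 : (1-y)^(a-1) = (1-y)^(-2:ℝ) * ((1-y)^(-(b-1)) * (1-y)^(a+b)) := by
    rw [← Real.rpow_add hw, ← Real.rpow_add hw]; congr 1; ring
  rw [h1, h2]
  ring



lemma half_sum {a b : ℝ} (ha : 0 < a) (hb : 0 < b) :
    ∫ y in Set.Ioo (0:ℝ) (1/2), (y^(a-1)*(1-y)^(b-1) + y^(b-1)*(1-y)^(a-1))
    = ∫ x in (0:ℝ)..1, x ^ (a-1) * (1-x) ^ (b-1) := by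
  have hint1 : IntervalIntegrable (fun x : ℝ => x ^ (a-1) * (1-x) ^ (b-1)) volume 0 1 :=
    beta_integrand_integrable ha hb
  have hint2 : IntervalIntegrable (fun x : ℝ => x ^ (b-1) * (1-x) ^ (a-1)) volume 0 1 :=
    beta_integrand_integrable hb ha
  have hsub1 : Set.uIcc (0:ℝ) (1/2) ⊆ Set.uIcc (0:ℝ) 1 := by
    rw [Set.uIcc_of_le (by norm_num : (0:ℝ) ≤ 1/2), Set.uIcc_of_le zero_le_one]
    exact Set.Icc_subset_Icc le_rfl (by norm_num)
  have hsub2 : Set.uIcc (1/2:ℝ) 1 ⊆ Set.uIcc (0:ℝ) 1 := by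
    rw [Set.uIcc_of_le (by norm_num : (1/2:ℝ) ≤ 1), Set.uIcc_of_le zero_le_one]
    exact Set.Icc_subset_Icc (by norm_num) le_rfl
  have i1 : IntegrableOn (fun x : ℝ => x ^ (a-1) * (1-x) ^ (b-1)) (Set.Ioo 0 (1/2)) volume := by
    have := (hint1.mono_set hsub1).1
    exact this.mono_set Set.Ioo_subset_Ioc_self
  have i2 : IntegrableOn (fun x : ℝ => x ^ (b-1) * (1-x) ^ (a-1)) (Set.Ioo 0 (1/2)) volume := by
    have := (hint2.mono_set hsub1).1
    exact this.mono_set Set.Ioo_subset_Ioc_self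
  rw [integral_add i1 i2]
  have hrefl : (∫ y in Set.Ioo (0:ℝ) (1/2), y^(b-1)*(1-y)^(a-1))
      = ∫ x in Set.Ioo (1/2:ℝ) 1, x^(a-1)*(1-x)^(b-1) := by
    have himg : (fun x : ℝ => 1 - x) '' Set.Ioo (1/2) 1 = Set.Ioo 0 (1/2) := by
      rw [Set.image_const_sub_Ioo]; norm_num
    have hderiv : ∀ x ∈ Set.Ioo (1/2:ℝ) 1,
        HasDerivWithinAt (fun x : ℝ => 1 - x) (-1) (Set.Ioo (1/2) 1) x :=
      fun x _ => ((hasDerivAt_id x).const_sub 1).hasDerivWithinAt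
    have hinj : Set.InjOn (fun x : ℝ => 1 - x) (Set.Ioo (1/2:ℝ) 1) :=
      fun x1 _ x2 _ h => by simpa using h
    rw [← himg, integral_image_eq_integral_abs_deriv_smul measurableSet_Ioo hderiv hinj]
    refine setIntegral_congr_fun measurableSet_Ioo fun x hx => ?_
    rw [smul_eq_mul, show (1:ℝ) - (1-x) = x by ring]
    norm_num
    ring
  rw [hrefl]
  have e1 : (∫ x in Set.Ioo (0:ℝ) (1/2), x ^ (a-1) * (1-x) ^ (b-1))
      = ∫ x in (0:ℝ)..(1/2), x ^ (a-1) * (1-x) ^ (b-1) := by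
    rw [intervalIntegral.integral_of_le (by norm_num : (0:ℝ) ≤ 1/2),
      integral_Ioc_eq_integral_Ioo]
  have e2 : (∫ x in Set.Ioo (1/2:ℝ) 1, x ^ (a-1) * (1-x) ^ (b-1))
      = ∫ x in (1/2:ℝ)..1, x ^ (a-1) * (1-x) ^ (b-1) := by
    rw [intervalIntegral.integral_of_le (by norm_num : (1/2:ℝ) ≤ 1),
      integral_Ioc_eq_integral_Ioo]
  rw [e1, e2]
  exact intervalIntegral.integral_add_adjacent_intervals
    (hint1.mono_set hsub1) (hint1.mono_set hsub2)


lemma exp_rpow' (s r : ℝ) : Real.exp s ^ r = Real.exp (s * r) := by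
  rw [Real.rpow_def_of_pos (Real.exp_pos s), Real.log_exp]

lemma main_subst (α β p : ℝ) (hp : 0 < p) :
    (∫ t in Set.Ioi (0 : ℝ), Real.cosh (2 * α * t) / (Real.cosh (p * t)) ^ (2 * β))
    = ∫ x in Set.Ioo (0:ℝ) 1, (4:ℝ)^(β-1) * p⁻¹ *
        ((x ^ ((β + α/p) - 1) + x ^ ((β - α/p) - 1)) * (1+x) ^ (-((β + α/p) + (β - α/p)))) := by
  set a := β + α/p with ha
  set b := β - α/p with hb
  have himg : (fun t : ℝ => Real.exp (-(2*p)*t)) '' Set.Ioi 0 = Set.Ioo 0 1 := by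
    ext x
    constructor
    · rintro ⟨t, ht, rfl⟩
      refine ⟨Real.exp_pos _, ?_⟩
      rw [show (1:ℝ) = Real.exp 0 by simp]
      apply Real.exp_lt_exp.2
      have : (0:ℝ) < t := ht
      nlinarith
    · rintro ⟨hx0, hx1⟩
      refine ⟨-(Real.log x)/(2*p), ?_, ?_⟩
      · have hlog : Real.log x < 0 := Real.log_neg hx0 hx1
        have : (0:ℝ) < 2*p := by linarith
        exact div_pos (by linarith) this
      · show Real.exp (-(2*p) * (-(Real.log x)/(2*p))) = x
        rw [show -(2*p) * (-(Real.log x)/(2*p)) = Real.log x by field_simp]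
        exact Real.exp_log hx0
  have hderiv : ∀ t ∈ Set.Ioi (0:ℝ),
      HasDerivWithinAt (fun t : ℝ => Real.exp (-(2*p)*t))
        (Real.exp (-(2*p)*t) * (-(2*p))) (Set.Ioi 0) t := by
    intro t _
    simpa using (((hasDerivAt_id t).const_mul (-(2*p))).exp).hasDerivWithinAt
  have hinj : Set.InjOn (fun t : ℝ => Real.exp (-(2*p)*t)) (Set.Ioi 0) := by
    intro t1 _ t2 _ h
    have := Real.exp_injective h
    have h2p : (-(2*p)) ≠ 0 := by intro h'; nlinarith [h']
    exact mul_left_cancel₀ h2p this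
  rw [← himg, integral_image_eq_integral_abs_deriv_smul measurableSet_Ioi hderiv hinj]
  refine setIntegral_congr_fun measurableSet_Ioi fun t ht => ?_
  set x := Real.exp (-(2*p)*t) with hxdef
  have hx0 : 0 < x := Real.exp_pos _
  have hK : (0:ℝ) < (1+x) ^ (2*β) := Real.rpow_pos_of_pos (by linarith) _
  have hcosh : Real.cosh (p*t) = Real.exp (p*t) * (1+x) / 2 := by
    rw [Real.cosh_eq, hxdef, mul_add, mul_one, ← Real.exp_add]
    ring_nf
  have hpow : Real.cosh (p*t) ^ (2*β) = Real.exp (p*t*(2*β)) * (1+x)^(2*β) / (4:ℝ)^β := by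
    rw [hcosh, Real.div_rpow (by positivity) (by norm_num),
      Real.mul_rpow (Real.exp_pos _).le (by linarith), exp_rpow']
    congr 1
    rw [show (4:ℝ) = (2:ℝ)^(2*(1:ℝ)) by
        rw [show 2*(1:ℝ) = ((2:ℕ):ℝ) by norm_num, Real.rpow_natCast]; norm_num,
      ← Real.rpow_mul (by norm_num : (0:ℝ) ≤ 2)]
    ring_nf
  have hxa : x ^ (a-1) = x⁻¹ * (Real.exp (-(2*α*t)) * (Real.exp (p*t*(2*β)))⁻¹) := by
    rw [hxdef, exp_rpow', ← Real.exp_neg, ← Real.exp_neg, ← Real.exp_add, ← Real.exp_add, Real.exp_eq_exp, ha]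
    field_simp
    ring
  have hxb : x ^ (b-1) = x⁻¹ * (Real.exp (2*α*t) * (Real.exp (p*t*(2*β)))⁻¹) := by
    rw [hxdef, exp_rpow', ← Real.exp_neg, ← Real.exp_neg, ← Real.exp_add, ← Real.exp_add, Real.exp_eq_exp, hb]
    field_simp
    ring
  have habs : |Real.exp (-(2*p)*t) * (-(2*p))| = x * (2*p) := by
    rw [abs_mul, abs_of_pos hx0, abs_neg, abs_of_pos (by linarith : (0:ℝ) < 2*p)]
  have h4 : (4:ℝ)^(β-1) = (4:ℝ)^β / 4 := by
    rw [Real.rpow_sub (by norm_num : (0:ℝ) < 4), Real.rpow_one]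
  rw [smul_eq_mul, habs, Real.cosh_eq (2*α*t), hpow,
    show -(a+b) = -(2*β) by rw [ha, hb]; ring,
    Real.rpow_neg (by linarith : (0:ℝ) ≤ 1+x), hxa, hxb, h4]
  have hE : Real.exp (p*t*(2*β)) ≠ 0 := Real.exp_ne_zero _
  have hF : (4:ℝ)^β ≠ 0 := (Real.rpow_pos_of_pos (by norm_num) _).ne'
  field_simp
  ring

theorem stmt_8 (α β p : ℝ) (hp : 0 < p) (h1 : β + α / p > 0) (h2 : β - α / p > 0) :
    ∫ t in Set.Ioi (0 : ℝ), Real.cosh (2 * α * t) / (Real.cosh (p * t)) ^ (2 * β)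
    = (4 : ℝ) ^ (β - 1) * p⁻¹ * realBeta (β + α / p) (β - α / p) := by
  rw [main_subst α β p hp, MeasureTheory.integral_const_mul, subst_half,
    half_sum h1 h2, ← realBeta_eq h1 h2]
end

section
/- Let α and β be real numbers with α > −1 and α < β. Then ∫_0^∞ (sinh x)^α/(cosh x)^β dx = (1/2)·B((1+α)/2, (β−α)/2). -/
open MeasureTheory Real

lemma realBeta_eq_integral {a b : ℝ} (ha : 0 < a) (hb : 0 < b) :
    ∫ s in Set.Ioo (0:ℝ) 1, s ^ (a - 1) * (1 - s) ^ (b - 1) = realBeta a b := by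
  have hcb : Complex.betaIntegral a b =
      ((∫ s in (0:ℝ)..1, s ^ (a - 1) * (1 - s) ^ (b - 1) : ℝ) : ℂ) := by
    rw [Complex.betaIntegral, ← intervalIntegral.integral_ofReal]
    apply intervalIntegral.integral_congr
    intro x hx
    rw [Set.uIcc_of_le zero_le_one] at hx
    push_cast
    rw [Complex.ofReal_cpow hx.1, Complex.ofReal_cpow (by linarith [hx.2])]
    push_cast
    ring
  have hG := Complex.Gamma_mul_Gamma_eq_betaIntegral
    (s := (a : ℂ)) (t := (b : ℂ)) (by simpa using ha) (by simpa using hb)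
  rw [hcb] at hG
  have hab : (0:ℝ) < Real.Gamma (a + b) := Real.Gamma_pos_of_pos (by linarith)
  have key : Real.Gamma a * Real.Gamma b
      = Real.Gamma (a + b) * ∫ s in (0:ℝ)..1, s ^ (a - 1) * (1 - s) ^ (b - 1) := by
    rw [show ((a:ℂ) + b) = ((a + b : ℝ) : ℂ) by push_cast; ring] at hG
    rw [Complex.Gamma_ofReal, Complex.Gamma_ofReal, Complex.Gamma_ofReal] at hG
    exact_mod_cast hG
  rw [intervalIntegral.integral_of_le zero_le_one,
    MeasureTheory.integral_Ioc_eq_integral_Ioo] at key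
  rw [realBeta, key]
  field_simp

theorem stmt_9 (α β : ℝ) (hα : α > -1) (hβ : α < β) :
    ∫ x in Set.Ioi (0 : ℝ), (Real.sinh x) ^ α / (Real.cosh x) ^ β
    = (1 / 2) * realBeta ((1 + α) / 2) ((β - α) / 2) := by
  have ha : 0 < (1 + α) / 2 := by linarith
  have hb : 0 < (β - α) / 2 := by linarith
  have hderiv : ∀ x : ℝ, HasDerivAt (fun x => Real.sinh x ^ 2 / Real.cosh x ^ 2)
      (2 * Real.sinh x / Real.cosh x ^ 3) x := by
    intro x
    have h1 : HasDerivAt (fun x => Real.sinh x ^ 2)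
        (2 * Real.sinh x ^ 1 * Real.cosh x) x := by
      simpa using (Real.hasDerivAt_sinh x).fun_pow 2
    have h2 : HasDerivAt (fun x => Real.cosh x ^ 2)
        (2 * Real.cosh x ^ 1 * Real.sinh x) x := by
      simpa using (Real.hasDerivAt_cosh x).fun_pow 2
    have h3 := h1.fun_div h2 (by positivity)
    convert h3 using 1
    · rfl
    · rfl
    have hc : Real.cosh x ^ 2 - Real.sinh x ^ 2 = 1 := Real.cosh_sq_sub_sinh_sq x
    have hcp := Real.cosh_pos x
    rw [div_eq_div_iff (by positivity) (by positivity)]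
    linear_combination (-(2 * Real.sinh x * Real.cosh x ^ 4)) * hc
  -- strict monotonicity on Ioi 0
  have hmono : ∀ x ∈ Set.Ioi (0:ℝ), ∀ y ∈ Set.Ioi (0:ℝ), x < y →
      Real.sinh x ^ 2 / Real.cosh x ^ 2 < Real.sinh y ^ 2 / Real.cosh y ^ 2 := by
    intro x hx y hy hxy
    have hcx : Real.cosh x < Real.cosh y := by
      rw [Real.cosh_lt_cosh]
      rw [abs_of_pos hx, abs_of_pos hy]; exact hxy
    have e : ∀ z : ℝ, Real.sinh z ^ 2 / Real.cosh z ^ 2 = 1 - 1 / Real.cosh z ^ 2 := by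
      intro z
      have := Real.cosh_pos z
      rw [Real.sinh_sq]
      field_simp
    rw [e, e]
    have h2 : Real.cosh x ^ 2 < Real.cosh y ^ 2 := by
      nlinarith [Real.cosh_pos x, Real.cosh_pos y]
    have h3 : 1 / Real.cosh y ^ 2 < 1 / Real.cosh x ^ 2 := by
      apply one_div_lt_one_div_of_lt (by positivity) h2
    linarith
  have hinj : Set.InjOn (fun x => Real.sinh x ^ 2 / Real.cosh x ^ 2) (Set.Ioi 0) := by
    intro x hx y hy hxy
    rcases lt_trichotomy x y with h | h | h
    · exact absurd hxy (ne_of_lt (hmono x hx y hy h))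
    · exact h
    · exact absurd hxy (ne_of_gt (hmono y hy x hx h))
  -- image
  have himg : (fun x => Real.sinh x ^ 2 / Real.cosh x ^ 2) '' Set.Ioi 0 = Set.Ioo 0 1 := by
    apply Set.Subset.antisymm
    · rintro _ ⟨x, hx, rfl⟩
      have hs : 0 < Real.sinh x := Real.sinh_pos_iff.2 hx
      have hc := Real.cosh_pos x
      constructor
      · positivity
      · rw [div_lt_one (by positivity)]
        nlinarith [Real.sinh_lt_cosh x]
    · rintro y ⟨hy0, hy1⟩
      set b := max 1 (1 / (1 - y)) with hbdef
      have hb1 : (1:ℝ) ≤ b := le_max_left _ _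
      have h1y : 0 < 1 - y := by linarith
      have hbig : 1 / (1 - y) ≤ b := le_max_right _ _
      have hsb : b < Real.sinh b := Real.self_lt_sinh_iff.2 (by linarith)
      have hscb : Real.sinh b < Real.cosh b := Real.sinh_lt_cosh b
      have h1c : 1 ≤ Real.cosh b := Real.one_le_cosh b
      have hcb : 1 / (1 - y) < Real.cosh b ^ 2 := by nlinarith
      have hfb : y < Real.sinh b ^ 2 / Real.cosh b ^ 2 := by
        rw [lt_div_iff₀ (by positivity), Real.sinh_sq]
        rw [div_lt_iff₀ h1y] at hcb
        nlinarith
      have hcont : ContinuousOn (fun x => Real.sinh x ^ 2 / Real.cosh x ^ 2)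
          (Set.Icc 0 b) := by
        apply Continuous.continuousOn
        exact (Real.continuous_sinh.pow 2).div (Real.continuous_cosh.pow 2)
          (fun x => by positivity)
      have hy' : y ∈ Set.Ioo (Real.sinh 0 ^ 2 / Real.cosh 0 ^ 2)
          (Real.sinh b ^ 2 / Real.cosh b ^ 2) := by
        constructor
        · simpa using hy0
        · exact hfb
      obtain ⟨x, hx, hfx⟩ := intermediate_value_Ioo (by linarith : (0:ℝ) ≤ b) hcont hy'
      exact ⟨x, hx.1, hfx⟩
  -- change of variables
  have hkey := integral_image_eq_integral_abs_deriv_smul (f := fun x => Real.sinh x ^ 2 / Real.cosh x ^ 2)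
    (f' := fun x => 2 * Real.sinh x / Real.cosh x ^ 3)
    measurableSet_Ioi (fun x _ => (hderiv x).hasDerivWithinAt) hinj
    (fun s => s ^ ((1 + α) / 2 - 1) * (1 - s) ^ ((β - α) / 2 - 1))
  rw [himg, realBeta_eq_integral ha hb] at hkey
  -- pointwise simplification of RHS of hkey
  have hpt : Set.EqOn
      (fun x => |2 * Real.sinh x / Real.cosh x ^ 3| •
        ((Real.sinh x ^ 2 / Real.cosh x ^ 2) ^ ((1 + α) / 2 - 1) *
          (1 - Real.sinh x ^ 2 / Real.cosh x ^ 2) ^ ((β - α) / 2 - 1)))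
      (fun x => 2 * (Real.sinh x ^ α / Real.cosh x ^ β)) (Set.Ioi 0) := by
    intro x hx
    have hs : 0 < Real.sinh x := Real.sinh_pos_iff.2 hx
    have hc : 0 < Real.cosh x := Real.cosh_pos x
    have hsc : Real.cosh x ^ 2 - Real.sinh x ^ 2 = 1 := Real.cosh_sq_sub_sinh_sq x
    simp only [smul_eq_mul]
    rw [abs_of_pos (by positivity)]
    set s := Real.sinh x
    set c := Real.cosh x
    have e1 : 1 - s ^ 2 / c ^ 2 = (c ^ 2)⁻¹ := by
      field_simp
      linarith
    have e2 : s ^ 2 / c ^ 2 = (s / c) ^ 2 := by rw [div_pow]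
    rw [e1, e2]
    have p2 : ∀ (t : ℝ), 0 ≤ t → ∀ e : ℝ, (t ^ 2) ^ e = t ^ (2 * e) := by
      intro t ht e
      rw [← Real.rpow_natCast t 2, ← Real.rpow_mul ht]
      norm_num
    have hdivpos : (0:ℝ) ≤ s / c := by positivity
    rw [p2 _ hdivpos, show (2:ℝ) * ((1 + α) / 2 - 1) = α - 1 by ring]
    have e3 : ((c ^ 2)⁻¹ : ℝ) ^ ((β - α) / 2 - 1) = c ^ (α - β + 2) := by
      rw [← Real.rpow_natCast c 2, ← Real.rpow_neg_one (c ^ ((2:ℕ):ℝ)),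
        ← Real.rpow_mul hc.le, ← Real.rpow_mul hc.le]
      congr 1
      push_cast
      ring
    rw [e3, Real.div_rpow hs.le hc.le]
    have es : s ^ (α - 1) * s = s ^ α := by
      rw [← Real.rpow_add_one hs.ne' (α - 1)]
      ring_nf
    have ec : c ^ β * c ^ (α - β + 2) = c ^ (α - 1) * c ^ (3:ℕ) := by
      rw [← Real.rpow_natCast c 3, ← Real.rpow_add hc, ← Real.rpow_add hc]
      congr 1
      push_cast
      ring
    have hsp : (0:ℝ) < s ^ (α - 1) := Real.rpow_pos_of_pos hs _
    have hcp1 : (0:ℝ) < c ^ (α - 1) := Real.rpow_pos_of_pos hc _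
    have hcp2 : (0:ℝ) < c ^ (α - β + 2) := Real.rpow_pos_of_pos hc _
    have hcpb : (0:ℝ) < c ^ β := Real.rpow_pos_of_pos hc _
    have hsa : (0:ℝ) < s ^ α := Real.rpow_pos_of_pos hs _
    field_simp
    linear_combination (c ^ (α - β + 2) * c ^ β) * es + (s ^ α) * ec
  rw [MeasureTheory.setIntegral_congr_fun measurableSet_Ioi hpt] at hkey
  rw [MeasureTheory.integral_const_mul] at hkey
  linarith
end

section
/- Let m be a positive integer and let s, β be real numbers with s > 0. Then ∫_0^∞ e^{−sx}·(cos(βx))^{2m} dx = 2^{1−2m} · ∑_{i=0}^{m-1} C(2m, i) · s/(((2m − 2i)β)² + s²) + 2^{−2m}·C(2m, m)/s. -/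
open Finset MeasureTheory Filter
open Complex (I)

lemma laplace_cos (s b : ℝ) (hs : 0 < s) :
    ∫ x in Set.Ioi (0:ℝ), Real.exp (-s*x) * Real.cos (b*x) = s / (b^2 + s^2) := by
  have hD : (0:ℝ) < b^2 + s^2 := by positivity
  set F : ℝ → ℝ := fun x => Real.exp (-s*x) * (b * Real.sin (b*x) - s * Real.cos (b*x)) / (b^2+s^2)
    with hF
  have hderiv : ∀ x ∈ Set.Ici (0:ℝ), HasDerivAt F (Real.exp (-s*x) * Real.cos (b*x)) x := by
    intro x _
    have h1 : HasDerivAt (fun x : ℝ => -s*x) (-s) x := by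
      simpa using (hasDerivAt_id x).const_mul (-s)
    have h2 : HasDerivAt (fun x : ℝ => b*x) b x := by
      simpa using (hasDerivAt_id x).const_mul b
    have he := h1.exp
    have hmain := ((he.mul (((h2.sin).const_mul b).sub ((h2.cos).const_mul s))).div_const (b^2+s^2))
    refine hmain.congr_deriv ?_
    rw [div_eq_iff hD.ne']
    simp only [Pi.sub_apply]
    ring
  have hint : IntegrableOn (fun x => Real.exp (-s*x) * Real.cos (b*x)) (Set.Ioi (0:ℝ)) := by
    apply Integrable.mono (exp_neg_integrableOn_Ioi 0 hs)
    · exact (((Real.continuous_exp.comp (continuous_const.mul continuous_id)).mul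
        (Real.continuous_cos.comp (continuous_const.mul continuous_id)))).aestronglyMeasurable
    · filter_upwards with x
      simp only [Real.norm_eq_abs, abs_mul, Real.abs_exp]
      exact mul_le_of_le_one_right (Real.exp_pos _).le (Real.abs_cos_le_one _)
  have htend : Tendsto F atTop (nhds 0) := by
    have h0 : Tendsto (fun x => Real.exp (-s*x) * ((|b|+s)/(b^2+s^2))) atTop (nhds 0) := by
      have he : Tendsto (fun x : ℝ => Real.exp (-s*x)) atTop (nhds 0) := by
        have hmul : Tendsto (fun x : ℝ => s*x) atTop atTop :=
          Tendsto.const_mul_atTop hs tendsto_id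
        have h3 := Real.tendsto_exp_neg_atTop_nhds_zero.comp hmul
        have : (fun x : ℝ => Real.exp (-s*x)) = ((fun x => Real.exp (-x)) ∘ fun x => s*x) := by
          funext x; simp [Function.comp, neg_mul]
        rw [this]; exact h3
      simpa using he.mul_const ((|b|+s)/(b^2+s^2))
    apply squeeze_zero_norm _ h0
    intro x
    have hb : |b * Real.sin (b*x) - s * Real.cos (b*x)| ≤ |b| + s := by
      have h1 := abs_sub (b * Real.sin (b*x)) (s * Real.cos (b*x))
      have h2 : |b * Real.sin (b*x)| ≤ |b| := by
        rw [abs_mul]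
        exact mul_le_of_le_one_right (abs_nonneg _) (Real.abs_sin_le_one _)
      have h3 : |s * Real.cos (b*x)| ≤ s := by
        rw [abs_mul, abs_of_pos hs]
        exact mul_le_of_le_one_right hs.le (Real.abs_cos_le_one _)
      linarith
    rw [hF]
    simp only [Real.norm_eq_abs, abs_div, abs_mul, Real.abs_exp, abs_of_pos hD,
      ← mul_div_assoc]
    gcongr
  have := integral_Ioi_of_hasDerivAt_of_tendsto' hderiv hint htend
  rw [this]
  simp only [hF, mul_zero, Real.sin_zero, Real.cos_zero, neg_zero, Real.exp_zero]
  ring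


lemma integrable_laplace_cos (s b : ℝ) (hs : 0 < s) :
    MeasureTheory.IntegrableOn (fun x => Real.exp (-s*x) * Real.cos (b*x)) (Set.Ioi (0:ℝ)) := by
  apply MeasureTheory.Integrable.mono (exp_neg_integrableOn_Ioi 0 hs)
  · exact (((Real.continuous_exp.comp (continuous_const.mul continuous_id)).mul
      (Real.continuous_cos.comp (continuous_const.mul continuous_id)))).aestronglyMeasurable
  · filter_upwards with x
    simp only [Real.norm_eq_abs, abs_mul, Real.abs_exp]
    exact mul_le_of_le_one_right (Real.exp_pos _).le (Real.abs_cos_le_one _)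


lemma two_cos_pow (m : ℕ) (w : ℂ) :
    (2 * Complex.cos w) ^ (2*m) =
      (∑ k ∈ Finset.range m, 2 * (Nat.choose (2*m) k : ℂ)
        * Complex.cos ((2*(m:ℂ) - 2*(k:ℂ)) * w))
        + (Nat.choose (2*m) m : ℂ) := by
  have hc : 2 * Complex.cos w = Complex.exp (w*I) + Complex.exp (-w*I) := by
    rw [Complex.cos]; ring
  set f : ℕ → ℂ := fun k => Complex.exp ((2*(k:ℂ) - 2*(m:ℂ)) * (w * I)) * (Nat.choose (2*m) k : ℂ)
    with hf
  have hsum : (2 * Complex.cos w) ^ (2*m) = ∑ k ∈ Finset.range (2*m+1), f k := by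
    rw [hc, add_pow]
    apply Finset.sum_congr rfl
    intro k hk
    rw [Finset.mem_range] at hk
    have hk' : k ≤ 2*m := by omega
    rw [hf]
    simp only
    rw [← Complex.exp_nat_mul, ← Complex.exp_nat_mul, ← Complex.exp_add]
    congr 2
    push_cast [Nat.cast_sub hk']
    ring
  rw [hsum]
  have hsplit : (2*m+1) = m + (m+1) := by ring
  rw [hsplit, Finset.sum_range_add, Finset.sum_range_succ']
  have hrefl : ∑ k ∈ Finset.range m, f (m + (k+1)) = ∑ k ∈ Finset.range m, f (2*m - k) := by
    rw [← Finset.sum_range_reflect]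
    apply Finset.sum_congr rfl
    intro k hk
    rw [Finset.mem_range] at hk
    congr 1
    omega
  rw [hrefl, add_zero]
  have hfm : f m = (Nat.choose (2*m) m : ℂ) := by
    rw [hf]; simp only
    rw [show (2*(m:ℂ) - 2*(m:ℂ)) = 0 by ring, zero_mul, Complex.exp_zero, one_mul]
  rw [hfm, ← add_assoc, ← Finset.sum_add_distrib]
  congr 1
  apply Finset.sum_congr rfl
  intro k hk
  rw [Finset.mem_range] at hk
  have hk2 : k ≤ 2*m := by omega
  rw [hf]
  simp only
  have hcast : ((2*m - k : ℕ) : ℂ) = 2*(m:ℂ) - (k:ℂ) := by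
    push_cast [Nat.cast_sub hk2]; ring
  rw [Nat.choose_symm hk2, hcast]
  rw [Complex.cos]
  ring_nf

lemma cos_pow_real (m : ℕ) (θ : ℝ) :
    Real.cos θ ^ (2*m) * 2^(2*m) =
      (∑ i ∈ Finset.range m, 2*(Nat.choose (2*m) i : ℝ) * Real.cos ((2*(m:ℝ) - 2*(i:ℝ))*θ))
        + (Nat.choose (2*m) m : ℝ) := by
  have h := two_cos_pow m (θ : ℂ)
  rw [mul_pow] at h
  apply Complex.ofReal_injective
  push_cast
  linear_combination h

theorem stmt_11 (m : ℕ) (hm : 0 < m) (s β : ℝ) (hs : 0 < s) :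
    ∫ x in Set.Ioi (0 : ℝ), Real.exp (-s * x) * (Real.cos (β * x)) ^ (2 * m)
    = 2 ^ (1 - 2 * (m : ℤ)) *
        (∑ i ∈ Finset.range m,
          (Nat.choose (2 * m) i : ℝ) *
            (s / (((2 * (m : ℝ) - 2 * (i : ℝ)) * β) ^ 2 + s ^ 2)))
      + 2 ^ (-(2 * (m : ℤ))) * (Nat.choose (2 * m) m : ℝ) / s := by
  have h2m : (0:ℝ) < 2^(2*m) := by positivity
  have hz1 : (2:ℝ) ^ (1 - 2*(m:ℤ)) = 2 / 2^(2*m) := by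
    rw [show (1 - 2*(m:ℤ)) = 1 - ((2*m : ℕ) : ℤ) by push_cast; ring,
      zpow_sub₀ (two_ne_zero), zpow_one, zpow_natCast]
  have hz2 : (2:ℝ) ^ (-(2*(m:ℤ))) = 1 / 2^(2*m) := by
    rw [show (2*(m:ℤ)) = ((2*m : ℕ) : ℤ) by push_cast; ring, zpow_neg, zpow_natCast, one_div]
  -- pointwise expansion of the integrand
  have hexp : ∀ x : ℝ, Real.exp (-s * x) * (Real.cos (β * x)) ^ (2 * m)
      = (∑ i ∈ Finset.range m, (2 / 2^(2*m) * (Nat.choose (2*m) i : ℝ))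
          * (Real.exp (-s*x) * Real.cos (((2*(m:ℝ) - 2*(i:ℝ)) * β) * x)))
        + (1 / 2^(2*m) * (Nat.choose (2*m) m : ℝ)) * Real.exp (-s*x) := by
    intro x
    have h := cos_pow_real m (β * x)
    have harg : ∀ i : ℕ, (2*(m:ℝ) - 2*(i:ℝ))*(β*x) = ((2*(m:ℝ) - 2*(i:ℝ)) * β) * x :=
      fun i => by ring
    simp only [harg] at h
    have hcos : Real.cos (β*x) ^ (2*m)
        = ((∑ i ∈ Finset.range m, 2*(Nat.choose (2*m) i : ℝ)
            * Real.cos (((2*(m:ℝ) - 2*(i:ℝ)) * β) * x)) + (Nat.choose (2*m) m : ℝ)) / 2^(2*m) := by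
      rw [eq_div_iff h2m.ne']
      exact h
    rw [hcos, ← mul_div_assoc, mul_add, add_div, Finset.mul_sum, Finset.sum_div]
    congr 1
    · apply Finset.sum_congr rfl
      intro i _
      ring
    · ring
  rw [MeasureTheory.setIntegral_congr_fun measurableSet_Ioi (fun x _ => hexp x)]
  have hint : ∀ b : ℝ, IntegrableOn (fun x => Real.exp (-s*x) * Real.cos (b*x))
      (Set.Ioi (0:ℝ)) := fun b => integrable_laplace_cos s b hs
  have hexpint : IntegrableOn (fun x => Real.exp (-s*x)) (Set.Ioi (0:ℝ)) :=
    exp_neg_integrableOn_Ioi 0 hs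
  rw [MeasureTheory.integral_add
    (MeasureTheory.integrable_finset_sum _
      (fun i _ => ((hint _).const_mul _)))
    (hexpint.const_mul _)]
  rw [MeasureTheory.integral_finset_sum _ (fun i _ => ((hint _).const_mul _))]
  have hlast : ∫ x in Set.Ioi (0:ℝ), Real.exp (-s*x) = 1/s := by
    have h := laplace_cos s 0 hs
    simp only [zero_mul, Real.cos_zero, mul_one] at h
    rw [h]
    field_simp
    ring
  simp only [integral_const_mul, laplace_cos _ _ hs, hlast, hz1, hz2]
  rw [Finset.mul_sum]
  congr 1
  · apply Finset.sum_congr rfl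
    intro i _
    ring
  · ring
end

section
/- Let n be a positive integer and let s, γ be real numbers with s > 0. Then ∫_0^∞ e^{−sx}·(sin(γx))^{2n} dx = (2n)!·γ^{2n} / ( s · ∏_{j=1}^{n} (s² + 4j²γ²) ). -/
open Finset MeasureTheory Set Filter Real

lemma aux_tendsto_exp (s : ℝ) (hs : 0 < s) :
    Tendsto (fun x : ℝ => Real.exp (-s * x)) atTop (nhds 0) :=
  tendsto_exp_atBot.comp (tendsto_id.const_mul_atTop_of_neg (by linarith))

lemma aux_int (s γ : ℝ) (hs : 0 < s) (m : ℕ) :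
    IntegrableOn (fun x : ℝ => Real.exp (-s * x) * Real.sin (γ * x) ^ m) (Set.Ioi 0) := by
  apply (exp_neg_integrableOn_Ioi 0 hs).mono'
  · exact ((Real.continuous_exp.comp (continuous_const.mul continuous_id)).mul
      ((Real.continuous_sin.comp (continuous_const.mul continuous_id)).pow m)).aestronglyMeasurable
  · filter_upwards with x
    rw [norm_mul, Real.norm_eq_abs, Real.abs_exp, Real.norm_eq_abs, abs_pow]
    have h1 : |Real.sin (γ * x)| ^ m ≤ 1 :=
      pow_le_one₀ (abs_nonneg _) (Real.abs_sin_le_one _)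
    nlinarith [Real.exp_pos (-s * x)]

lemma aux_base (s : ℝ) (hs : 0 < s) :
    ∫ x in Set.Ioi (0 : ℝ), Real.exp (-s * x) = 1 / s := by
  have h : ∀ x ∈ Set.Ici (0:ℝ), HasDerivAt (fun x => -Real.exp (-s * x) / s)
      (Real.exp (-s * x)) x := by
    intro x _
    have h1 : HasDerivAt (fun x : ℝ => -s * x) (-s) x := by
      simpa using (hasDerivAt_id x).const_mul (-s)
    have : HasDerivAt (fun x => -Real.exp (-s * x) / s) (-(Real.exp (-s * x) * -s) / s) x :=
      (h1.exp.neg).div_const s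
    convert this using 1
    field_simp
  have ht : Tendsto (fun x : ℝ => -Real.exp (-s * x) / s) atTop (nhds 0) := by
    have := ((aux_tendsto_exp s hs).neg).div_const s
    simpa using this
  have key := integral_Ioi_of_hasDerivAt_of_tendsto' h
    ((exp_neg_integrableOn_Ioi 0 hs)) ht
  rw [key]
  field_simp
  simp

lemma key (n : ℕ) (s γ : ℝ) (hs : 0 < s) :
    (s^2 + 4*((n:ℝ)+1)^2*γ^2) *
      ∫ x in Set.Ioi (0:ℝ), Real.exp (-s*x) * Real.sin (γ*x) ^ (2*n+2)
    = (2*(n:ℝ)+2)*(2*(n:ℝ)+1)*γ^2 *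
      ∫ x in Set.Ioi (0:ℝ), Real.exp (-s*x) * Real.sin (γ*x) ^ (2*n) := by
  set c1 : ℝ := -s with hc1
  set c2 : ℝ := -(2*((n:ℝ)+1))*γ with hc2
  set F : ℝ → ℝ := fun x => Real.exp (-s*x) *
      (c1 * Real.sin (γ*x)^(2*n+2) + c2 * Real.sin (γ*x)^(2*n+1) * Real.cos (γ*x)) with hF
  set g : ℝ → ℝ := fun x =>
      (s^2 + 4*((n:ℝ)+1)^2*γ^2) * (Real.exp (-s*x) * Real.sin (γ*x)^(2*n+2))
      - (2*(n:ℝ)+2)*(2*(n:ℝ)+1)*γ^2 * (Real.exp (-s*x) * Real.sin (γ*x)^(2*n)) with hg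
  have hderiv : ∀ x ∈ Set.Ici (0:ℝ), HasDerivAt F (g x) x := by
    intro x _
    have h1 : HasDerivAt (fun x : ℝ => -s * x) (-s) x := by
      simpa using (hasDerivAt_id x).const_mul (-s)
    have hgx : HasDerivAt (fun x : ℝ => γ * x) γ x := by
      simpa using (hasDerivAt_id x).const_mul γ
    have hsin : HasDerivAt (fun x : ℝ => Real.sin (γ*x)) (Real.cos (γ*x) * γ) x :=
      (Real.hasDerivAt_sin _).comp x hgx
    have hcos : HasDerivAt (fun x : ℝ => Real.cos (γ*x)) (-Real.sin (γ*x) * γ) x :=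
      (Real.hasDerivAt_cos _).comp x hgx
    have hp1 := hsin.pow (2*n+2)
    have hp2 := hsin.pow (2*n+1)
    have hin := ((hp1.const_mul c1).add (((hp2.const_mul c2)).mul hcos))
    have hfull : HasDerivAt F _ x := h1.exp.mul hin
    convert hfull using 1
    have hsc : Real.sin (γ*x)^2 + Real.cos (γ*x)^2 = 1 := Real.sin_sq_add_cos_sq _
    have hnn : (2*n+2-1 : ℕ) = 2*n+1 := rfl
    have hnn2 : (2*n+1-1 : ℕ) = 2*n := rfl
    simp only [hg, hc1, hc2, hnn, hnn2, Pi.pow_apply]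
    push_cast
    linear_combination (Real.exp (-s*x) * ((2*((n:ℝ)+1))*γ) * γ * (2*(n:ℝ)+1) *
      Real.sin (γ*x)^(2*n)) * hsc
  have htend : Tendsto F atTop (nhds 0) := by
    refine squeeze_zero_norm (a := fun x => (|c1| + |c2|) * Real.exp (-s*x)) (fun x => ?_) ?_
    · rw [hF]
      simp only
      rw [norm_mul, Real.norm_eq_abs, Real.abs_exp, Real.norm_eq_abs, mul_comm]
      gcongr
      have h1 : |Real.sin (γ*x)| ≤ 1 := Real.abs_sin_le_one _
      have h2 : |Real.cos (γ*x)| ≤ 1 := Real.abs_cos_le_one _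
      calc |c1 * Real.sin (γ*x)^(2*n+2) + c2 * Real.sin (γ*x)^(2*n+1) * Real.cos (γ*x)|
          ≤ |c1 * Real.sin (γ*x)^(2*n+2)| + |c2 * Real.sin (γ*x)^(2*n+1) * Real.cos (γ*x)| :=
            abs_add_le _ _
        _ ≤ |c1| * 1 + |c2| * 1 * 1 := by
            rw [abs_mul, abs_mul, abs_mul, abs_pow, abs_pow]
            gcongr <;> first
              | exact pow_le_one₀ (abs_nonneg _) h1
              | exact h2
        _ = |c1| + |c2| := by ring
    · simpa using (aux_tendsto_exp s hs).const_mul (|c1| + |c2|)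
  have hgint : IntegrableOn g (Set.Ioi 0) := by
    exact ((aux_int s γ hs (2*n+2)).const_mul _).sub ((aux_int s γ hs (2*n)).const_mul _)
  have hmain := integral_Ioi_of_hasDerivAt_of_tendsto' hderiv hgint htend
  have hF0 : F 0 = 0 := by
    rw [hF]
    simp only [mul_zero, Real.sin_zero]
    rw [zero_pow (by omega), zero_pow (by omega)]
    ring
  rw [hF0, sub_zero] at hmain
  have hsplit : ∫ x in Set.Ioi (0:ℝ), g x
      = (s^2 + 4*((n:ℝ)+1)^2*γ^2) *
          (∫ x in Set.Ioi (0:ℝ), Real.exp (-s*x) * Real.sin (γ*x)^(2*n+2))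
        - (2*(n:ℝ)+2)*(2*(n:ℝ)+1)*γ^2 *
          ∫ x in Set.Ioi (0:ℝ), Real.exp (-s*x) * Real.sin (γ*x)^(2*n) := by
    rw [hg]
    rw [integral_sub ((aux_int s γ hs (2*n+2)).const_mul _) ((aux_int s γ hs (2*n)).const_mul _),
      MeasureTheory.integral_const_mul, MeasureTheory.integral_const_mul]
  rw [hsplit] at hmain
  linarith

theorem stmt_12 (n : ℕ) (hn : 0 < n) (s γ : ℝ) (hs : 0 < s) :
    ∫ x in Set.Ioi (0 : ℝ), Real.exp (-s * x) * (Real.sin (γ * x)) ^ (2 * n)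
    = (Nat.factorial (2 * n) : ℝ) * γ ^ (2 * n) /
        (s * ∏ j ∈ Finset.range n, (s ^ 2 + 4 * ((j : ℝ) + 1) ^ 2 * γ ^ 2)) := by
  clear hn
  induction n with
  | zero => simpa using aux_base s hs
  | succ n ih =>
    have hk := key n s γ hs
    have hD : (0:ℝ) < s^2 + 4*((n:ℝ)+1)^2*γ^2 := by positivity
    have hP : (0:ℝ) < ∏ j ∈ Finset.range n, (s ^ 2 + 4 * ((j:ℝ) + 1) ^ 2 * γ ^ 2) := by
      apply Finset.prod_pos
      intro j _
      positivity
    have h2 : 2 * (n+1) = 2*n+2 := by ring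
    rw [h2, Finset.prod_range_succ]
    have hI : ∫ x in Set.Ioi (0:ℝ), Real.exp (-s*x) * Real.sin (γ*x) ^ (2*n+2)
        = (2*(n:ℝ)+2)*(2*(n:ℝ)+1)*γ^2 *
          (∫ x in Set.Ioi (0:ℝ), Real.exp (-s*x) * Real.sin (γ*x) ^ (2*n))
          / (s^2 + 4*((n:ℝ)+1)^2*γ^2) := by
      rw [eq_div_iff hD.ne']
      linarith
    rw [hI, ih]
    have hfac : (Nat.factorial (2*n+2) : ℝ)
        = (2*(n:ℝ)+2)*(2*(n:ℝ)+1)*(Nat.factorial (2*n)) := by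
      have h3 : 2*n+2 = (2*n+1)+1 := rfl
      rw [h3, Nat.factorial_succ, Nat.factorial_succ]
      push_cast
      ring
    rw [hfac]
    field_simp
    ring
end

section
/- Let p be a nonnegative integer and let s, λ be real numbers with s > 0. Then ∫_0^∞ e^{−sx}·(sin(λx))^{2p+1} dx = (−1)^p·2^{−2p} · ∑_{k=0}^{p} (−1)^k·C(2p+1, k) · ((2p+1 − 2k)λ)/(((2p+1 − 2k)λ)² + s²). -/
open Finset MeasureTheory Filter

section
open Real

lemma mysin_le (x : ℝ) : |Real.sin x| ≤ 1 :=
  abs_le.mpr ⟨Real.neg_one_le_sin _, Real.sin_le_one _⟩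

lemma mycos_le (x : ℝ) : |Real.cos x| ≤ 1 :=
  abs_le.mpr ⟨Real.neg_one_le_cos _, Real.cos_le_one _⟩

lemma integrable_exp_sin {s : ℝ} (hs : 0 < s) (b : ℝ) :
    IntegrableOn (fun x => Real.exp (-s * x) * Real.sin (b * x)) (Set.Ioi (0:ℝ)) := by
  refine (exp_neg_integrableOn_Ioi 0 hs).mono' ?_ ?_
  · exact (Continuous.mul (by continuity) (by continuity)).aestronglyMeasurable
  · filter_upwards with x
    rw [norm_mul, Real.norm_eq_abs, Real.norm_eq_abs, abs_exp]
    calc Real.exp (-s*x) * |Real.sin (b*x)| ≤ Real.exp (-s*x) * 1 :=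
          mul_le_mul_of_nonneg_left (mysin_le _) (le_of_lt (exp_pos _))
      _ = Real.exp (-s*x) := mul_one _

lemma laplace_sin {s : ℝ} (hs : 0 < s) (b : ℝ) :
    ∫ x in Set.Ioi (0:ℝ), Real.exp (-s * x) * Real.sin (b * x)
      = b / (b ^ 2 + s ^ 2) := by
  have hden : (0:ℝ) < s ^ 2 + b ^ 2 := by positivity
  set F : ℝ → ℝ := fun x =>
    -(Real.exp (-s * x) * (s * Real.sin (b * x) + b * Real.cos (b * x))) / (s ^ 2 + b ^ 2)
    with hF
  have hderiv : ∀ x ∈ Set.Ici (0:ℝ),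
      HasDerivAt F (Real.exp (-s * x) * Real.sin (b * x)) x := by
    intro x _
    have h1 : HasDerivAt (fun x => Real.exp (-s * x)) (-s * Real.exp (-s * x)) x := by
      simpa [mul_comm] using ((hasDerivAt_id x).const_mul (-s)).exp
    have h2 : HasDerivAt (fun x => Real.sin (b * x)) (b * Real.cos (b * x)) x := by
      simpa [mul_comm] using ((hasDerivAt_id x).const_mul b).sin
    have h3 : HasDerivAt (fun x => Real.cos (b * x)) (-(b * Real.sin (b * x))) x := by
      simpa [mul_comm, neg_mul] using ((hasDerivAt_id x).const_mul b).cos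
    have h4 := ((h1.mul ((h2.const_mul s).add (h3.const_mul b))).neg).div_const (s ^ 2 + b ^ 2)
    refine HasDerivAt.congr_deriv h4 ?_
    simp only [Pi.add_apply]
    rw [div_eq_iff hden.ne']
    ring
  have hint := integrable_exp_sin hs b
  have htend : Tendsto F atTop (nhds 0) := by
    have h0' : Tendsto (fun x : ℝ => s * x) atTop atTop :=
      tendsto_id.const_mul_atTop hs
    have h0 : Tendsto (fun x : ℝ => Real.exp (-s * x)) atTop (nhds 0) := by
      have := tendsto_exp_neg_atTop_nhds_zero.comp h0'
      simp only [Function.comp_def] at this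
      simpa [neg_mul] using this
    have hb : IsBoundedUnder (· ≤ ·) atTop
        (fun x : ℝ => ‖s * Real.sin (b * x) + b * Real.cos (b * x)‖) := by
      refine isBoundedUnder_of ⟨|s| + |b|, fun x => ?_⟩
      calc ‖s * Real.sin (b * x) + b * Real.cos (b * x)‖
          ≤ ‖s * Real.sin (b * x)‖ + ‖b * Real.cos (b * x)‖ := norm_add_le _ _
        _ ≤ |s| * 1 + |b| * 1 := by
            rw [norm_mul, norm_mul, Real.norm_eq_abs, Real.norm_eq_abs, Real.norm_eq_abs, Real.norm_eq_abs]
            gcongr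
            · exact mysin_le _
            · exact mycos_le _
        _ = |s| + |b| := by ring
    have := (h0.zero_mul_isBoundedUnder_le hb).neg.div_const (s ^ 2 + b ^ 2)
    simpa [hF, neg_div, zero_div] using this
  have := integral_Ioi_of_hasDerivAt_of_tendsto' hderiv hint htend
  rw [this]
  have hF0 : F 0 = -b / (s ^ 2 + b ^ 2) := by
    simp [hF]
  rw [hF0, zero_sub, neg_div, neg_neg, add_comm (s^2)]

end

section
open Complex

lemma sin_pow_odd (p : ℕ) (θ : ℝ) :
    Real.sin θ ^ (2 * p + 1)
      = (-1:ℝ) ^ p * (2:ℝ) ^ (-(2 * (p:ℤ))) *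
        ∑ k ∈ Finset.range (p + 1), (-1:ℝ) ^ k * (Nat.choose (2 * p + 1) k : ℝ) *
          Real.sin ((2 * (p:ℝ) + 1 - 2 * (k:ℝ)) * θ) := by
  rw [← Complex.ofReal_inj]
  push_cast [Complex.ofReal_sin]
  set n : ℕ := 2 * p + 1 with hn
  set a : ℂ := Complex.exp (θ * I) with haa
  have ha : a ≠ 0 := Complex.exp_ne_zero _
  have hA : ∀ t : ℤ, a ^ t = Complex.exp (t * ((θ:ℂ) * I)) := fun t =>
    (Complex.exp_int_mul _ _).symm
  -- sin of integer multiples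
  have hsinm : ∀ m : ℤ, a ^ (-m) - a ^ m = -2 * I * Complex.sin ((m:ℂ) * (θ:ℂ)) := by
    intro m
    rw [hA, hA, Complex.sin]
    rw [show (-((m:ℂ) * θ) * I) = (-m : ℤ) * ((θ:ℂ) * I) by push_cast; ring,
        show ((m:ℂ) * θ * I) = (m : ℤ) * ((θ:ℂ) * I) by push_cast; ring]
    linear_combination (Complex.exp ((-m : ℤ) * ((θ:ℂ) * I))
      - Complex.exp ((m : ℤ) * ((θ:ℂ) * I))) * Complex.I_sq
  -- f j
  set f : ℕ → ℂ := fun j => ((-1:ℂ)) ^ (n - j) * (n.choose j : ℂ) * a ^ ((n:ℤ) - 2 * j)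
    with hf
  -- Step 1
  have step1 : (Complex.sin θ) ^ n = I ^ n / 2 ^ n * ∑ j ∈ Finset.range (n + 1), f j := by
    have hs : Complex.sin θ = (a⁻¹ + -a) * I / 2 := by
      rw [Complex.sin, haa, ← Complex.exp_neg]
      ring_nf
    rw [hs, div_pow, mul_pow, add_pow]
    rw [Finset.sum_mul, Finset.sum_div, Finset.mul_sum]
    refine Finset.sum_congr rfl fun j hj => ?_
    have hjn : j ≤ n := Nat.lt_succ_iff.mp (Finset.mem_range.mp hj)
    rw [hf]
    have h1 : a⁻¹ ^ j = a ^ (-(j:ℤ)) := by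
      rw [zpow_neg, ← zpow_natCast, inv_zpow]
    have h2 : (-a) ^ (n - j) = (-1:ℂ) ^ (n - j) * a ^ ((n:ℤ) - j) := by
      rw [neg_pow, ← zpow_natCast a (n - j), Nat.cast_sub hjn]
    have h3 : a ^ (-(j:ℤ)) * a ^ ((n:ℤ) - j) = a ^ ((n:ℤ) - 2 * j) := by
      rw [← zpow_add₀ ha]; ring_nf
    calc a⁻¹ ^ j * (-a) ^ (n - j) * (n.choose j : ℂ) * I ^ n / 2 ^ n
        = (a ^ (-(j:ℤ)) * a ^ ((n:ℤ) - j)) * ((-1:ℂ) ^ (n - j) * (n.choose j : ℂ) * I ^ n / 2 ^ n) := by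
          rw [h1, h2]; ring
      _ = I ^ n / 2 ^ n * f j := by rw [h3, hf]; ring
  -- Step 2: fold the sum
  have h21 : ∑ j ∈ Finset.range (p + 1), f (p + 1 + j)
      = ∑ k ∈ Finset.range (p + 1), f (n - k) := by
    rw [← Finset.sum_range_reflect (fun j => f (p + 1 + j)) (p + 1)]
    refine Finset.sum_congr rfl fun k hk => ?_
    have hk' : k < p + 1 := Finset.mem_range.mp hk
    have : p + 1 + (p + 1 - 1 - k) = n - k := by omega
    simp only [this]
  have step2 : ∑ j ∈ Finset.range (n + 1), f j
      = ∑ k ∈ Finset.range (p + 1), (f k + f (n - k)) := by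
    calc ∑ j ∈ Finset.range (n + 1), f j
        = ∑ j ∈ Finset.range ((p + 1) + (p + 1)), f j := by
          have : n + 1 = (p + 1) + (p + 1) := by rw [hn]; omega
          rw [this]
      _ = (∑ j ∈ Finset.range (p + 1), f j)
            + ∑ j ∈ Finset.range (p + 1), f (p + 1 + j) :=
          Finset.sum_range_add f _ _
      _ = ∑ k ∈ Finset.range (p + 1), (f k + f (n - k)) := by
          rw [h21, Finset.sum_add_distrib]
  -- Step 3: pair up the terms
  have step3 : ∀ k ∈ Finset.range (p + 1),
      f k + f (n - k) = (-2 * I) * ((-1:ℂ) ^ k * (n.choose k : ℂ) *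
        Complex.sin ((2 * (p:ℂ) + 1 - 2 * (k:ℂ)) * θ)) := by
    intro k hk
    have hkp : k ≤ p := Nat.lt_succ_iff.mp (Finset.mem_range.mp hk)
    have hkn : k ≤ n := by rw [hn]; omega
    have e1 : n - (n - k) = k := by rw [hn]; omega
    have e2 : n.choose (n - k) = n.choose k := Nat.choose_symm hkn
    have hfn : f (n - k) = (-1:ℂ) ^ k * (n.choose k : ℂ) * a ^ (-((n:ℤ) - 2 * k)) := by
      rw [hf]
      simp only [e1, e2]
      have : (n:ℤ) - 2 * ((n - k : ℕ) : ℤ) = -((n:ℤ) - 2 * k) := by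
        push_cast [Nat.cast_sub hkn]; ring
      rw [this]
    have hneg : ((-1:ℂ)) ^ (n - k) = -(-1:ℂ) ^ k := by
      have h4 : ((-1:ℂ)) ^ (n - k) * (-1:ℂ) ^ k = (-1:ℂ) ^ n := by
        rw [← pow_add, Nat.sub_add_cancel hkn]
      have h5 : ((-1:ℂ)) ^ n = -1 := Odd.neg_one_pow ⟨p, by rw [hn]⟩
      have h6 : ((-1:ℂ)) ^ k * (-1:ℂ) ^ k = 1 := by
        rw [← pow_add, ← two_mul, pow_mul]; norm_num
      calc (-1:ℂ) ^ (n - k) = (-1:ℂ) ^ (n - k) * ((-1:ℂ) ^ k * (-1:ℂ) ^ k) := by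
            rw [h6, mul_one]
        _ = ((-1:ℂ) ^ (n - k) * (-1:ℂ) ^ k) * (-1:ℂ) ^ k := by ring
        _ = -(-1:ℂ) ^ k := by rw [h4, h5]; ring
    have hfk : f k = -((-1:ℂ) ^ k) * (n.choose k : ℂ) * a ^ ((n:ℤ) - 2 * k) := by
      simp only [hf]
      rw [hneg]
    have harg : ((((n:ℤ) - 2 * k : ℤ)) : ℂ) * (θ:ℂ) = (2 * (p:ℂ) + 1 - 2 * (k:ℂ)) * θ := by
      simp only [hn]; push_cast; ring
    calc f k + f (n - k)
        = (-1:ℂ) ^ k * (n.choose k : ℂ) *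
            (a ^ (-((n:ℤ) - 2 * k)) - a ^ ((n:ℤ) - 2 * k)) := by
          rw [hfk, hfn]; ring
      _ = (-1:ℂ) ^ k * (n.choose k : ℂ) *
            (-2 * I * Complex.sin ((((n:ℤ) - 2 * k : ℤ)) * (θ:ℂ))) := by
          rw [hsinm]
      _ = (-2 * I) * ((-1:ℂ) ^ k * (n.choose k : ℂ) *
            Complex.sin ((2 * (p:ℂ) + 1 - 2 * (k:ℂ)) * θ)) := by
          rw [harg]; ring
  have hcoef : I ^ n / 2 ^ n * (-2 * I) = (-1:ℂ) ^ p * (2:ℂ) ^ (-(2 * (p:ℤ))) := by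
    have hI : I ^ n = (-1:ℂ) ^ p * I := by
      rw [hn, pow_succ, pow_mul, Complex.I_sq]
    have h2 : ((2:ℂ)) ^ (-(2 * (p:ℤ))) = ((2:ℂ) ^ (2 * p : ℕ))⁻¹ := by
      rw [zpow_neg, ← zpow_natCast]
      norm_num
    rw [hI, h2, hn]
    have h2p : ((2:ℂ)) ^ (2 * p : ℕ) ≠ 0 := pow_ne_zero _ two_ne_zero
    field_simp
    linear_combination (-2 * (2:ℂ) ^ (2 * p)) * Complex.I_sq
  rw [step1, step2, Finset.sum_congr rfl step3, ← Finset.mul_sum, ← mul_assoc, hcoef]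

end

theorem stmt_13 (p : ℕ) (s lam : ℝ) (hs : 0 < s) :
    ∫ x in Set.Ioi (0 : ℝ), Real.exp (-s * x) * (Real.sin (lam * x)) ^ (2 * p + 1)
    = (-1 : ℝ) ^ p * 2 ^ (-(2 * (p : ℤ))) *
        ∑ k ∈ Finset.range (p + 1),
          (-1 : ℝ) ^ k * (Nat.choose (2 * p + 1) k : ℝ) *
            (((2 * (p : ℝ) + 1 - 2 * (k : ℝ)) * lam) /
              (((2 * (p : ℝ) + 1 - 2 * (k : ℝ)) * lam) ^ 2 + s ^ 2)) := by
  have hrw : ∀ x : ℝ, Real.exp (-s * x) * (Real.sin (lam * x)) ^ (2 * p + 1)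
      = ∑ k ∈ Finset.range (p + 1),
          ((-1:ℝ) ^ p * (2:ℝ) ^ (-(2 * (p:ℤ))) * ((-1:ℝ) ^ k * (Nat.choose (2 * p + 1) k : ℝ))) *
            (Real.exp (-s * x) * Real.sin ((2 * (p:ℝ) + 1 - 2 * (k:ℝ)) * lam * x)) := by
    intro x
    rw [sin_pow_odd p (lam * x), Finset.mul_sum, Finset.mul_sum]
    refine Finset.sum_congr rfl fun k hk => ?_
    rw [mul_assoc (2 * (p:ℝ) + 1 - 2 * (k:ℝ)) lam x]
    ring
  simp only [hrw]
  have hint : ∀ k ∈ Finset.range (p + 1),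
      Integrable (fun x : ℝ =>
        ((-1:ℝ) ^ p * (2:ℝ) ^ (-(2 * (p:ℤ))) * ((-1:ℝ) ^ k * (Nat.choose (2 * p + 1) k : ℝ))) *
          (Real.exp (-s * x) * Real.sin ((2 * (p:ℝ) + 1 - 2 * (k:ℝ)) * lam * x)))
        (volume.restrict (Set.Ioi (0:ℝ))) := fun k _ =>
      ((integrable_exp_sin hs ((2 * (p:ℝ) + 1 - 2 * (k:ℝ)) * lam)).const_mul _)
  rw [MeasureTheory.integral_finset_sum _ hint]
  simp only [MeasureTheory.integral_const_mul, laplace_sin hs]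
  rw [Finset.mul_sum]
  exact Finset.sum_congr rfl fun k _ => by ring
end

section
/- Let p be a nonnegative integer and let s, λ be real numbers with s > 0. Then ∫_0^∞ e^{−sx}·(sin(λx))^{2p+1} dx = (2p+1)!·λ^{2p+1} / ∏_{j=0}^{p} (s² + (2j+1)²λ²). -/
open Finset MeasureTheory Set Real Filter

lemma intg (n : ℕ) {s : ℝ} (lam : ℝ) (hs : 0 < s) :
    IntegrableOn (fun x => Real.exp (-s*x) * Real.sin (lam*x)^n) (Set.Ioi (0:ℝ)) := by
  apply Integrable.mono' (exp_neg_integrableOn_Ioi 0 hs)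
  · exact (((Real.continuous_exp.comp (continuous_const.mul continuous_id)).mul
      ((Real.continuous_sin.comp (continuous_const.mul continuous_id)).pow n))).aestronglyMeasurable
  · filter_upwards with x
    rw [norm_mul, Real.norm_eq_abs, Real.norm_eq_abs, Real.abs_exp]
    calc Real.exp (-s*x) * |Real.sin (lam*x)^n| ≤ Real.exp (-s*x) * 1 := by
          apply mul_le_mul_of_nonneg_left _ (Real.exp_pos _).le
          rw [abs_pow]
          exact pow_le_one₀ (abs_nonneg _) (Real.abs_sin_le_one _)
      _ = Real.exp (-s*x) := mul_one _

lemma tendsto_aux {s : ℝ} (hs : 0 < s) (g : ℝ → ℝ) (C : ℝ) (hg : ∀ x, |g x| ≤ C) :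
    Tendsto (fun x => Real.exp (-s*x) * g x) atTop (nhds 0) := by
  have hlim : Tendsto (fun x : ℝ => C * Real.exp (-s*x)) atTop (nhds 0) := by
    have : Tendsto (fun x : ℝ => Real.exp (-s*x)) atTop (nhds 0) := by
      apply Real.tendsto_exp_atBot.comp
      exact Tendsto.const_mul_atTop_of_neg (by linarith) tendsto_id
    simpa using this.const_mul C
  apply squeeze_zero_norm (fun x => ?_) hlim
  rw [norm_mul, Real.norm_eq_abs, Real.norm_eq_abs, Real.abs_exp, mul_comm]
  exact mul_le_mul_of_nonneg_right (hg x) (Real.exp_pos _).le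

lemma base {s : ℝ} (lam : ℝ) (hs : 0 < s) :
    ∫ x in Set.Ioi (0:ℝ), Real.exp (-s*x) * Real.sin (lam*x)
      = lam / (s^2 + lam^2) := by
  have hd : (0:ℝ) < s^2 + lam^2 := by positivity
  set F : ℝ → ℝ := fun x =>
    Real.exp (-s*x) * ((-s * Real.sin (lam*x) - lam * Real.cos (lam*x)) / (s^2 + lam^2)) with hF
  have hder : ∀ x ∈ Set.Ici (0:ℝ), HasDerivAt F (Real.exp (-s*x) * Real.sin (lam*x)) x := by
    intro x _
    have h1 : HasDerivAt (fun x : ℝ => Real.exp (-s*x)) (Real.exp (-s*x) * (-s*1)) x :=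
      ((hasDerivAt_id x).const_mul (-s)).exp
    have h2 : HasDerivAt (fun x : ℝ => Real.sin (lam*x)) (Real.cos (lam*x) * (lam*1)) x :=
      ((hasDerivAt_id x).const_mul lam).sin
    have h3 : HasDerivAt (fun x : ℝ => Real.cos (lam*x)) (-Real.sin (lam*x) * (lam*1)) x :=
      ((hasDerivAt_id x).const_mul lam).cos
    have := h1.mul (((h2.const_mul (-s)).sub (h3.const_mul lam)).div_const (s^2 + lam^2))
    refine this.congr_deriv ?_
    simp only [Pi.sub_apply, Pi.mul_apply, Pi.pow_apply]
    field_simp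
    ring
  have htend : Tendsto F atTop (nhds 0) := by
    apply tendsto_aux hs _ ((s + |lam|) / (s^2 + lam^2))
    intro x
    rw [abs_div, abs_of_pos hd]
    gcongr
    refine (abs_sub _ _).trans ?_
    rw [abs_mul, abs_mul, abs_neg, abs_of_pos hs]
    nlinarith [Real.abs_sin_le_one (lam*x), Real.abs_cos_le_one (lam*x), abs_nonneg lam,
      abs_nonneg (Real.sin (lam*x)), abs_nonneg (Real.cos (lam*x)), hs.le]
  have key := integral_Ioi_of_hasDerivAt_of_tendsto' hder
    (intg 1 lam hs |>.congr_fun (fun x _ => by simp only [pow_one]) measurableSet_Ioi) htend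
  rw [key, hF]
  simp [Real.sin_zero, Real.cos_zero]
  field_simp


lemma recur (m : ℕ) {s : ℝ} (lam : ℝ) (hs : 0 < s) :
    (s^2 + ((m:ℝ)+2)^2*lam^2) * ∫ x in Set.Ioi (0:ℝ), Real.exp (-s*x) * Real.sin (lam*x)^(m+2)
    = ((m:ℝ)+2)*((m:ℝ)+1)*lam^2 * ∫ x in Set.Ioi (0:ℝ), Real.exp (-s*x) * Real.sin (lam*x)^m := by
  set A : ℝ := s^2 + ((m:ℝ)+2)^2*lam^2 with hA
  set B : ℝ := ((m:ℝ)+2)*((m:ℝ)+1)*lam^2 with hB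
  set F : ℝ → ℝ := fun x => Real.exp (-s*x) *
    (-s * Real.sin (lam*x)^(m+2) - (((m:ℝ)+2)*lam) * (Real.sin (lam*x)^(m+1) * Real.cos (lam*x)))
    with hF
  have hder : ∀ x ∈ Set.Ici (0:ℝ), HasDerivAt F
      (A * (Real.exp (-s*x) * Real.sin (lam*x)^(m+2))
        - B * (Real.exp (-s*x) * Real.sin (lam*x)^m)) x := by
    intro x _
    have h1 : HasDerivAt (fun x : ℝ => Real.exp (-s*x)) (Real.exp (-s*x) * (-s*1)) x :=
      ((hasDerivAt_id x).const_mul (-s)).exp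
    have h2 : HasDerivAt (fun x : ℝ => Real.sin (lam*x)) (Real.cos (lam*x) * (lam*1)) x :=
      ((hasDerivAt_id x).const_mul lam).sin
    have h3 : HasDerivAt (fun x : ℝ => Real.cos (lam*x)) (-Real.sin (lam*x) * (lam*1)) x :=
      ((hasDerivAt_id x).const_mul lam).cos
    have hp2 := h2.pow (m+2)
    have hp1 := h2.pow (m+1)
    have := h1.mul (((hp2.const_mul (-s)).sub ((hp1.mul h3).const_mul (((m:ℝ)+2)*lam))))
    refine this.congr_deriv ?_
    simp only [Pi.sub_apply, Pi.mul_apply, Pi.pow_apply]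
    symm
    have hq1 : m + 2 - 1 = m + 1 := rfl
    have hq2 : m + 1 - 1 = m := rfl
    rw [hq1, hq2, hA, hB]
    push_cast
    have hsc := Real.sin_sq_add_cos_sq (lam*x)
    linear_combination (((m:ℝ)+2)*((m:ℝ)+1)*lam^2 * Real.exp (-s*x) * Real.sin (lam*x)^m) * hsc
  have htend : Tendsto F atTop (nhds 0) := by
    apply tendsto_aux hs _ (s + ((m:ℝ)+2)*|lam|)
    intro x
    have hs1 : |Real.sin (lam*x)^(m+2)| ≤ 1 := by
      rw [abs_pow]; exact pow_le_one₀ (abs_nonneg _) (Real.abs_sin_le_one _)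
    have hs2 : |Real.sin (lam*x)^(m+1) * Real.cos (lam*x)| ≤ 1 := by
      rw [abs_mul, abs_pow]
      exact mul_le_one₀ (pow_le_one₀ (abs_nonneg _) (Real.abs_sin_le_one _)) (abs_nonneg _)
        (Real.abs_cos_le_one _)
    refine (abs_sub _ _).trans ?_
    rw [abs_mul, abs_mul, abs_neg, abs_of_pos hs, abs_mul]
    have hm : |((m:ℝ)+2)| = (m:ℝ)+2 := abs_of_pos (by positivity)
    rw [hm]
    have b1 := mul_le_mul_of_nonneg_left hs1 hs.le
    have b2 := mul_le_mul_of_nonneg_left hs2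
      (mul_nonneg (by positivity : (0:ℝ) ≤ (m:ℝ)+2) (abs_nonneg lam))
    linarith
  have hint : IntegrableOn (fun x => A * (Real.exp (-s*x) * Real.sin (lam*x)^(m+2))
      - B * (Real.exp (-s*x) * Real.sin (lam*x)^m)) (Set.Ioi (0:ℝ)) :=
    ((intg (m+2) lam hs).const_mul A).sub ((intg m lam hs).const_mul B)
  have key := integral_Ioi_of_hasDerivAt_of_tendsto' hder hint htend
  have hF0 : F 0 = 0 := by
    simp [hF]
  rw [hF0, sub_zero] at key
  rw [integral_sub ((intg (m+2) lam hs).const_mul A) ((intg m lam hs).const_mul B),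
    integral_const_mul, integral_const_mul] at key
  linarith [key]

theorem stmt_14 (p : ℕ) (s lam : ℝ) (hs : 0 < s) :
    ∫ x in Set.Ioi (0 : ℝ), Real.exp (-s * x) * (Real.sin (lam * x)) ^ (2 * p + 1)
    = (Nat.factorial (2 * p + 1) : ℝ) * lam ^ (2 * p + 1) /
        ∏ j ∈ Finset.range (p + 1), (s ^ 2 + (2 * (j : ℝ) + 1) ^ 2 * lam ^ 2) := by
  induction p with
  | zero =>
      simpa using base lam hs
  | succ p ih =>
      have hD : (0:ℝ) < ∏ j ∈ Finset.range (p + 1), (s ^ 2 + (2 * (j : ℝ) + 1) ^ 2 * lam ^ 2) :=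
        Finset.prod_pos (fun j _ => by positivity)
      have hnew : (0:ℝ) < s ^ 2 + (2 * ((p:ℝ) + 1) + 1) ^ 2 * lam ^ 2 := by positivity
      have hrec := recur (2 * p + 1) lam hs
      have hexp : 2 * (p + 1) + 1 = (2 * p + 1) + 2 := by ring
      have hfac : (Nat.factorial (2 * (p + 1) + 1) : ℝ)
          = ((2*p:ℝ)+3) * ((2*p:ℝ)+2) * (Nat.factorial (2 * p + 1) : ℝ) := by
        rw [hexp, show (2*p+1)+2 = ((2*p+1)+1)+1 from rfl, Nat.factorial_succ, Nat.factorial_succ]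
        push_cast; ring
      rw [hexp] at *
      rw [Finset.prod_range_succ, hfac]
      rw [ih] at hrec
      push_cast at hrec ⊢
      have h2 : (s ^ 2 + ((2*p:ℝ)+1+2) ^ 2 * lam ^ 2) ≠ 0 := by positivity
      field_simp at hrec ⊢
      linear_combination hrec
end
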